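/- arXiv:1906.04697 — 4 statements merged into one kernel-verified Lean document; each statement's English description precedes it below -/
import Mathlib

section
/- Fix a realization of the empirical Bellman operators T̂₁, T̂₂, … and of the recentering operator T̃_N, a recentering point θ̄, and define the iterates θ_{t+1} = (1−λ_t)·θ_t + λ_t·{T̂_t(θ_t) − T̂_t(θ̄) + T̃_N(θ̄)} with stepsize λ_t = 1/(1+(1−γ)t), the noise terms W_t = −(T̂_t(θ̄) − T̂_t(θ*)) − T(θ*) + T̃_N(θ̄), and the auxiliary process path₁ = 0, path_{t+1} = (1−λ_t)·path_t + λ_t·W_t. Then for every iteration t ≥ 1, ‖θ_{t+1} − θ*‖_∞ ≤ (2/(1+(1−γ)t))·(‖θ₁ − θ*‖_∞ + Σ_{ℓ=1}^{t} ‖path_ℓ‖_∞) + ‖path_{t+1}‖_∞. -/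
open MeasureTheory ProbabilityTheory Finset

namespace VRQ

variable {S A : Type} [Fintype S] [Fintype A] [Nonempty S] [Nonempty A]

/-- A finite Markov decision process: transition probabilities and rewards. -/
structure MDP (S A : Type) [Fintype S] [Fintype A] where
  P : S → A → S → ℝ
  P_nonneg : ∀ s a s', 0 ≤ P s a s'
  P_sum_one : ∀ s a, ∑ s', P s a s' = 1
  r : S → A → ℝ

/-- `vmax θ s = max_{a} θ s a`. -/
noncomputable def vmax (θ : S → A → ℝ) (s : S) : ℝ :=
  (Finset.univ : Finset A).sup' Finset.univ_nonempty (θ s)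

/-- Sup-norm over state-action pairs. -/
noncomputable def supNorm (θ : S → A → ℝ) : ℝ :=
  (Finset.univ : Finset (S × A)).sup' Finset.univ_nonempty fun p => |θ p.1 p.2|

/-- The population Bellman operator. -/
noncomputable def bellman (M : MDP S A) (γ : ℝ) (θ : S → A → ℝ) : S → A → ℝ :=
  fun s a => M.r s a + γ * ∑ s', M.P s a s' * vmax θ s'

/-- The empirical Bellman operator built from the sample `X`. -/
noncomputable def empBellman (M : MDP S A) (γ : ℝ) (X : S → A → S) (θ : S → A → ℝ) :
    S → A → ℝ :=
  fun s a => M.r s a + γ * vmax θ (X s a)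

/-- The entrywise standard deviation `σ(θ)(s,a)` of the empirical Bellman operator at `θ`. -/
noncomputable def bellStd (M : MDP S A) (γ : ℝ) (θ : S → A → ℝ) : S → A → ℝ :=
  fun s a => Real.sqrt (γ ^ 2 *
    (∑ s', M.P s a s' * (vmax θ s') ^ 2 - (∑ s', M.P s a s' * vmax θ s') ^ 2))

/-- Monte Carlo approximation `T̃_N` of the Bellman operator from `N` samples. -/
noncomputable def mcBellman (M : MDP S A) (γ : ℝ) (N : ℕ) (Y : ℕ → S → A → S)
    (θ : S → A → ℝ) : S → A → ℝ :=
  fun s a => (N : ℝ)⁻¹ * ∑ i ∈ Finset.range N, empBellman M γ (Y i) θ s a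

/-- Stepsize `λ_k = 1/(1+(1-γ)k)`. -/
noncomputable def stepSize (γ : ℝ) (k : ℕ) : ℝ := 1 / (1 + (1 - γ) * k)

/-- Variance-reduced `Q`-learning iterates within one epoch: `vrIter ... t = θ_{t+1}`,
with `θ₁ = θbar` and `θ_{t+1} = (1-λ_t) θ_t + λ_t (T̂_t(θ_t) - T̂_t(θbar) + rec)`. -/
noncomputable def vrIter (M : MDP S A) (γ : ℝ) (θbar rec : S → A → ℝ)
    (X : ℕ → S → A → S) : ℕ → S → A → ℝ
  | 0 => θbar
  | t + 1 => fun s a =>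
      (1 - stepSize γ (t + 1)) * vrIter M γ θbar rec X t s a +
        stepSize γ (t + 1) *
          (empBellman M γ (X (t + 1)) (vrIter M γ θbar rec X t) s a -
            empBellman M γ (X (t + 1)) θbar s a + rec s a)

/-- One epoch of variance-reduced `Q`-learning. -/
noncomputable def runEpoch (M : MDP S A) (γ : ℝ) (K N : ℕ)
    (X Y : ℕ → S → A → S) (θbar : S → A → ℝ) : S → A → ℝ :=
  vrIter M γ θbar (mcBellman M γ N Y θbar) X K

/-- The full variance-reduced `Q`-learning algorithm: `vrQLearn ... m = θ̄_m`. -/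
noncomputable def vrQLearn (M : MDP S A) (γ : ℝ) (K : ℕ) (Nm : ℕ → ℕ)
    (X Y : ℕ → ℕ → S → A → S) (θ0 : S → A → ℝ) : ℕ → S → A → ℝ
  | 0 => θ0
  | m + 1 => runEpoch M γ K (Nm (m + 1)) (X (m + 1)) (Y (m + 1))
      (vrQLearn M γ K Nm X Y θ0 m)

/-- Auxiliary noise process: `path₁ = 0`, `path_{t+1} = (1-λ_t) path_t + λ_t W_t`. -/
noncomputable def auxPath (γ : ℝ) (W : ℕ → S → A → ℝ) : ℕ → S → A → ℝ
  | 0 => fun _ _ => 0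
  | t + 1 =>
      if t = 0 then fun _ _ => 0
      else fun s a => (1 - stepSize γ t) * auxPath γ W t s a + stepSize γ t * W t s a

/-- `X : Ω → S → A → S` is a generative-model sample: each coordinate `X ω s a`
is distributed according to `P(· | s,a)`. -/
def IsSample {Ω : Type} [MeasurableSpace Ω] [MeasurableSpace S] (μ : Measure Ω)
    (M : MDP S A) (X : Ω → S → A → S) : Prop :=
  (∀ s a, Measurable fun ω => X ω s a) ∧
    ∀ s a s', μ {ω | X ω s a = s'} = ENNReal.ofReal (M.P s a s')

/-- Policy transition operator `P^π`. -/
noncomputable def polOp (M : MDP S A) (π : S → A) (u : S → A → ℝ) : S → A → ℝ :=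
  fun s a => ∑ s', M.P s a s' * u s' (π s')

/-- The resolvent `(I - γ P^π)⁻¹ = Σ_{k≥0} γ^k (P^π)^k`. -/
noncomputable def resolvent (M : MDP S A) (γ : ℝ) (π : S → A) (u : S → A → ℝ) :
    S → A → ℝ :=
  fun s a => ∑' k : ℕ, γ ^ k * (polOp M π)^[k] u s a


lemma abs_le_supNorm (θ : S → A → ℝ) (s : S) (a : A) : |θ s a| ≤ supNorm θ :=
  Finset.le_sup' (f := fun p : S × A => |θ p.1 p.2|) (Finset.mem_univ (s, a))

lemma supNorm_nonneg (θ : S → A → ℝ) : 0 ≤ supNorm θ := by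
  obtain ⟨s⟩ := (inferInstance : Nonempty S)
  obtain ⟨a⟩ := (inferInstance : Nonempty A)
  exact le_trans (abs_nonneg _) (abs_le_supNorm θ s a)

lemma supNorm_le {θ : S → A → ℝ} {c : ℝ} (h : ∀ s a, |θ s a| ≤ c) : supNorm θ ≤ c :=
  Finset.sup'_le _ _ fun p _ => h p.1 p.2

lemma supNorm_triangle (f g : S → A → ℝ) :
    supNorm f ≤ supNorm (fun s a => f s a - g s a) + supNorm g := by
  apply supNorm_le
  intro s a
  have h1 := abs_le_supNorm (fun s a => f s a - g s a) s a
  have h2 := abs_le_supNorm g s a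
  have : f s a = (f s a - g s a) + g s a := by ring
  rw [this]
  exact le_trans (abs_add_le _ _) (by linarith)

lemma vmax_le_add (θ θ' : S → A → ℝ) (x : S) :
    vmax θ x ≤ vmax θ' x + supNorm (fun s a => θ s a - θ' s a) := by
  apply Finset.sup'_le
  intro a _
  have h1 : θ x a - θ' x a ≤ supNorm (fun s a => θ s a - θ' s a) :=
    le_trans (le_abs_self _) (abs_le_supNorm (fun s a => θ s a - θ' s a) x a)
  have h2 : θ' x a ≤ vmax θ' x :=
    Finset.le_sup' (f := θ' x) (Finset.mem_univ a)
  linarith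

lemma vmax_sub_le (θ θ' : S → A → ℝ) (x : S) :
    |vmax θ x - vmax θ' x| ≤ supNorm (fun s a => θ s a - θ' s a) := by
  rw [abs_sub_le_iff]
  constructor
  · have := vmax_le_add θ θ' x; linarith
  · have h := vmax_le_add θ' θ x
    have he : supNorm (fun s a => θ' s a - θ s a) = supNorm (fun s a => θ s a - θ' s a) := by
      unfold supNorm
      congr 1
      funext p
      exact abs_sub_comm _ _
    rw [he] at h
    linarith

lemma denom_pos {γ : ℝ} (hγ1 : γ < 1) (k : ℕ) : (0:ℝ) < 1 + (1 - γ) * k := by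
  have hk : (0:ℝ) ≤ (k:ℝ) := Nat.cast_nonneg k
  nlinarith

/-- Key deterministic recursion bound, proved by induction. -/
lemma key_bound (M : MDP S A) (γ : ℝ) (hγ0 : 0 < γ) (hγ1 : γ < 1)
    (θstar : S → A → ℝ) (hfix : bellman M γ θstar = θstar)
    (X : ℕ → S → A → S) (θbar rec : S → A → ℝ) (W : ℕ → S → A → ℝ)
    (hW : ∀ t s a, W t s a =
        -(empBellman M γ (X t) θbar s a - empBellman M γ (X t) θstar s a) -
          bellman M γ θstar s a + rec s a) :
    ∀ k : ℕ, (1 + (1 - γ) * k) *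
        supNorm (fun s a =>
          vrIter M γ θbar rec X k s a - θstar s a - auxPath γ W (k + 1) s a) ≤
      supNorm (fun s a => θbar s a - θstar s a) +
        ∑ ℓ ∈ Finset.Icc 1 k, supNorm (auxPath γ W ℓ) := by
  have hb : ∀ s a, bellman M γ θstar s a = θstar s a := by
    intro s a; rw [hfix]
  -- pointwise recursion identity
  have hid : ∀ (k : ℕ) (s : S) (a : A),
      vrIter M γ θbar rec X (k+1) s a - θstar s a - auxPath γ W (k+2) s a
        = (1 - stepSize γ (k+1)) *
            (vrIter M γ θbar rec X k s a - θstar s a - auxPath γ W (k+1) s a) +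
          stepSize γ (k+1) * (γ *
            (vmax (vrIter M γ θbar rec X k) (X (k+1) s a) -
              vmax θstar (X (k+1) s a))) := by
    intro k s a
    have hW' := hW (k+1) s a
    show vrIter M γ θbar rec X (k+1) s a - θstar s a - auxPath γ W (k+1+1) s a = _
    simp only [vrIter, auxPath, empBellman, Nat.succ_ne_zero, if_false]
    rw [hW', hb s a]
    simp only [empBellman]
    ring
  intro k
  induction k with
  | zero =>
    have h1 : auxPath γ W 1 = fun (_ : S) (_ : A) => (0:ℝ) := by
      simp [auxPath]
    have h2 : Finset.Icc 1 0 = (∅ : Finset ℕ) := by decide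
    rw [h1, h2]
    simp [vrIter]
  | succ k ih =>
    set U := supNorm (fun s a =>
      vrIter M γ θbar rec X k s a - θstar s a - auxPath γ W (k + 1) s a) with hUdef
    set P := supNorm (auxPath γ W (k + 1)) with hPdef
    have hU0 : 0 ≤ U := supNorm_nonneg _
    have hP0 : 0 ≤ P := supNorm_nonneg _
    have hc : (0:ℝ) < 1 + (1 - γ) * ((k:ℝ) + 1) := by
      have := denom_pos hγ1 (k+1); push_cast at this; linarith
    have hlam : stepSize γ (k+1) = 1 / (1 + (1 - γ) * ((k:ℝ) + 1)) := by
      simp only [stepSize, Nat.cast_add, Nat.cast_one]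
    have hlam_pos : 0 < stepSize γ (k+1) := by
      rw [hlam]; positivity
    have hlam_le : stepSize γ (k+1) ≤ 1 := by
      rw [hlam, div_le_one hc]
      have hk : (0:ℝ) ≤ (k:ℝ) := Nat.cast_nonneg k
      nlinarith
    -- contraction bound for θt k - θstar
    have h3 : supNorm (fun s a => vrIter M γ θbar rec X k s a - θstar s a) ≤ U + P := by
      have := supNorm_triangle (fun s a => vrIter M γ θbar rec X k s a - θstar s a)
        (auxPath γ W (k+1))
      exact this
    have hstep : supNorm (fun s a =>
        vrIter M γ θbar rec X (k+1) s a - θstar s a - auxPath γ W (k+2) s a) ≤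
        (1 - stepSize γ (k+1)) * U + stepSize γ (k+1) * (γ * (U + P)) := by
      apply supNorm_le
      intro s a
      rw [hid k s a]
      have h1 : |vrIter M γ θbar rec X k s a - θstar s a - auxPath γ W (k+1) s a| ≤ U := by
        rw [hUdef]
        exact abs_le_supNorm
          (fun s a => vrIter M γ θbar rec X k s a - θstar s a - auxPath γ W (k+1) s a) s a
      have h2 : |vmax (vrIter M γ θbar rec X k) (X (k+1) s a) -
          vmax θstar (X (k+1) s a)| ≤ U + P :=
        le_trans (vmax_sub_le _ _ _) h3
      calc |(1 - stepSize γ (k+1)) *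
              (vrIter M γ θbar rec X k s a - θstar s a - auxPath γ W (k+1) s a) +
            stepSize γ (k+1) * (γ *
              (vmax (vrIter M γ θbar rec X k) (X (k+1) s a) -
                vmax θstar (X (k+1) s a)))|
          ≤ (1 - stepSize γ (k+1)) *
              |vrIter M γ θbar rec X k s a - θstar s a - auxPath γ W (k+1) s a| +
            stepSize γ (k+1) * (γ *
              |vmax (vrIter M γ θbar rec X k) (X (k+1) s a) -
                vmax θstar (X (k+1) s a)|) := by
            refine le_trans (abs_add_le _ _) ?_
            rw [abs_mul, abs_mul, abs_mul]
            rw [abs_of_nonneg (by linarith : (0:ℝ) ≤ 1 - stepSize γ (k+1)),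
              abs_of_nonneg hlam_pos.le, abs_of_nonneg hγ0.le]
        _ ≤ (1 - stepSize γ (k+1)) * U + stepSize γ (k+1) * (γ * (U + P)) := by
            have hg1 : (0:ℝ) ≤ 1 - stepSize γ (k+1) := by linarith
            have e1 := mul_le_mul_of_nonneg_left h1 hg1
            have e2 := mul_le_mul_of_nonneg_left h2
              (mul_nonneg hlam_pos.le hγ0.le)
            nlinarith [e1, e2]
    -- multiply through by the denominator
    have hmul : (1 + (1 - γ) * ((k:ℝ) + 1)) *
        ((1 - stepSize γ (k+1)) * U + stepSize γ (k+1) * (γ * (U + P)))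
          = (1 + (1 - γ) * (k:ℝ)) * U + γ * P := by
      rw [hlam]
      field_simp
      ring
    have hsum : ∑ ℓ ∈ Finset.Icc 1 (k+1), supNorm (auxPath γ W ℓ)
        = (∑ ℓ ∈ Finset.Icc 1 k, supNorm (auxPath γ W ℓ)) + P := by
      rw [Finset.sum_Icc_succ_top (by omega : 1 ≤ k + 1)]
    push_cast
    rw [hsum]
    have hle : (1 + (1 - γ) * ((k:ℝ) + 1)) *
        supNorm (fun s a =>
          vrIter M γ θbar rec X (k+1) s a - θstar s a - auxPath γ W (k+2) s a) ≤
        (1 + (1 - γ) * (k:ℝ)) * U + γ * P := by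
      rw [← hmul]
      exact mul_le_mul_of_nonneg_left hstep hc.le
    have hγP : γ * P ≤ P := by nlinarith
    calc (1 + (1 - γ) * ((k:ℝ) + 1)) *
        supNorm (fun s a =>
          vrIter M γ θbar rec X (k + 1) s a - θstar s a - auxPath γ W (k + 1 + 1) s a)
        ≤ (1 + (1 - γ) * (k:ℝ)) * U + γ * P := hle
      _ ≤ (supNorm (fun s a => θbar s a - θstar s a) +
            ∑ ℓ ∈ Finset.Icc 1 k, supNorm (auxPath γ W ℓ)) + P := by linarith
      _ = _ := by ring

/-- Deterministic recursion bound for the variance-reduced iterates in terms of the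
auxiliary noise process (adapted cone-contractive SA bound). -/
theorem stmt7 :
    ∀ (S A : Type) [Fintype S] [Fintype A] [Nonempty S] [Nonempty A]
      (M : MDP S A) (γ : ℝ), 0 < γ → γ < 1 →
      ∀ θstar : S → A → ℝ, bellman M γ θstar = θstar →
      ∀ (X : ℕ → S → A → S) (N : ℕ) (Y : ℕ → S → A → S) (θbar : S → A → ℝ)
        (W : ℕ → S → A → ℝ),
        (∀ t s a, W t s a =
          -(empBellman M γ (X t) θbar s a - empBellman M γ (X t) θstar s a) -
            bellman M γ θstar s a + mcBellman M γ N Y θbar s a) →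
      ∀ t : ℕ, 1 ≤ t →
        supNorm (fun s a =>
            vrIter M γ θbar (mcBellman M γ N Y θbar) X t s a - θstar s a) ≤
          2 / (1 + (1 - γ) * t) *
            (supNorm (fun s a => θbar s a - θstar s a) +
              ∑ ℓ ∈ Finset.Icc 1 t, supNorm (auxPath γ W ℓ)) +
          supNorm (auxPath γ W (t + 1)) := by
  intro S A _ _ _ _ M γ hγ0 hγ1 θstar hfix X N Y θbar W hW t _
  have key := key_bound M γ hγ0 hγ1 θstar hfix X θbar (mcBellman M γ N Y θbar) W hW t
  set U := supNorm (fun s a =>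
    vrIter M γ θbar (mcBellman M γ N Y θbar) X t s a - θstar s a -
      auxPath γ W (t + 1) s a) with hUdef
  set P := supNorm (auxPath γ W (t + 1)) with hPdef
  set D := supNorm (fun s a => θbar s a - θstar s a) with hDdef
  set Ssum := ∑ ℓ ∈ Finset.Icc 1 t, supNorm (auxPath γ W ℓ) with hSdef
  have hc : (0:ℝ) < 1 + (1 - γ) * (t:ℝ) := denom_pos hγ1 t
  have hU0 : 0 ≤ U := supNorm_nonneg _
  have hD0 : 0 ≤ D := supNorm_nonneg _
  have hS0 : 0 ≤ Ssum := Finset.sum_nonneg fun ℓ _ => supNorm_nonneg _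
  have htri : supNorm (fun s a =>
      vrIter M γ θbar (mcBellman M γ N Y θbar) X t s a - θstar s a) ≤ U + P :=
    supNorm_triangle _ (auxPath γ W (t + 1))
  have hu : U ≤ 2 / (1 + (1 - γ) * (t:ℝ)) * (D + Ssum) := by
    rw [div_mul_eq_mul_div, le_div_iff₀ hc]
    nlinarith
  linarith

end VRQ
end

section
/- Fix δ ∈ (0,1), a number of epochs M ≥ 1, and B > 0. If the recentering point θ̄ satisfies ‖θ̄ − θ*‖_∞ ≤ B and T̃_N is formed from N i.i.d. empirical Bellman operators, then the noise matrix V° = (T̃_N(θ̄) − T̃_N(θ*)) − (T(θ̄) − T(θ*)) satisfies ‖V°‖_∞ ≤ 4·B·√(log(8MD/δ)/N) with probability at least 1 − δ/(3M). -/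
open MeasureTheory ProbabilityTheory Finset

namespace VRQ

variable {S A : Type} [Fintype S] [Fintype A] [Nonempty S] [Nonempty A]

open Real


/-- Reindexing an independent family along an injective map. -/
lemma iIndepFun_precomp_of_injective {Ω ι κ β : Type*} [MeasurableSpace Ω]
    [mβ : MeasurableSpace β] {μ : Measure Ω} {f : ι → Ω → β}
    (h : iIndepFun f μ) (e : κ → ι) (he : Function.Injective e) :
    iIndepFun (fun k => f (e k)) μ := by
  classical
  rw [iIndepFun_iff_measure_inter_preimage_eq_mul] at h ⊢
  intro S sets H
  set sets' : ι → Set β := fun j =>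
    if hj : ∃ k ∈ S, e k = j then sets hj.choose else Set.univ with hsets'
  have hkey : ∀ k ∈ S, sets' (e k) = sets k := by
    intro k hk
    have hex : ∃ k' ∈ S, e k' = e k := ⟨k, hk, rfl⟩
    have : hex.choose = k := he hex.choose_spec.2
    simp [hsets', dif_pos hex, this]
  have H' : ∀ j ∈ S.image e, MeasurableSet (sets' j) := by
    intro j hj
    rcases Finset.mem_image.1 hj with ⟨k, hk, rfl⟩
    rw [hkey k hk]; exact H k hk
  have := h (S.image e) H'
  rw [Finset.set_biInter_finset_image, Finset.prod_image
    (fun a ha b hb hab => he hab)] at this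
  calc μ (⋂ k ∈ S, f (e k) ⁻¹' sets k)
      = μ (⋂ k ∈ S, f (e k) ⁻¹' sets' (e k)) := by
        congr 1; apply Set.iInter₂_congr; intro k hk; rw [hkey k hk]
    _ = ∏ k ∈ S, μ (f (e k) ⁻¹' sets' (e k)) := this
    _ = ∏ k ∈ S, μ (f (e k) ⁻¹' sets k) := by
        apply Finset.prod_congr rfl; intro k hk; rw [hkey k hk]

/-- Expectation of a function of a finitely-valued random variable. -/
lemma integral_comp_finite {Ω S : Type*} [MeasurableSpace Ω] [Fintype S]
    [MeasurableSpace S] [MeasurableSingletonClass S] (μ : Measure Ω)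
    [IsProbabilityMeasure μ] (X : Ω → S) (hX : Measurable X) (g : S → ℝ)
    (p : S → ℝ) (hp0 : ∀ s', 0 ≤ p s')
    (hp : ∀ s', μ {ω | X ω = s'} = ENNReal.ofReal (p s')) :
    ∫ ω, g (X ω) ∂μ = ∑ s', p s' * g s' := by
  rw [← integral_map hX.aemeasurable (measurable_of_finite g).aestronglyMeasurable,
    integral_fintype .of_finite]
  refine Finset.sum_congr rfl fun s' _ => ?_
  have : (μ.map X) {s'} = ENNReal.ofReal (p s') := by
    rw [Measure.map_apply hX (measurableSet_singleton s')]
    have : X ⁻¹' {s'} = {ω | X ω = s'} := rfl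
    rw [this, hp]
  rw [Measure.real, this, ENNReal.toReal_ofReal (hp0 s'), smul_eq_mul]



lemma integrable_exp_of_bounded {Ω : Type*} [MeasurableSpace Ω] {μ : Measure Ω}
    [IsFiniteMeasure μ] {Z : Ω → ℝ} (hZ : Measurable Z) {c : ℝ}
    (hb : ∀ ω, |Z ω| ≤ c) (t : ℝ) :
    Integrable (fun ω => exp (t * Z ω)) μ := by
  refine ⟨((hZ.const_mul t).exp).aestronglyMeasurable, ?_⟩
  refine HasFiniteIntegral.of_bounded (C := exp (|t| * c)) (ae_of_all _ fun ω => ?_)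
  rw [Real.norm_eq_abs, abs_exp]
  apply exp_le_exp.2
  calc t * Z ω ≤ |t * Z ω| := le_abs_self _
    _ = |t| * |Z ω| := abs_mul _ _
    _ ≤ |t| * c := by
        apply mul_le_mul_of_nonneg_left (hb ω) (abs_nonneg t)

/-- Sub-Gaussian mgf bound for a centered bounded random variable. -/
lemma mgf_le_of_bounded {Ω : Type*} [MeasurableSpace Ω] {μ : Measure Ω}
    [IsProbabilityMeasure μ] {Z : Ω → ℝ} (hZ : Measurable Z) {c : ℝ} (hc : 0 < c)
    (hb : ∀ ω, |Z ω| ≤ c) (hmean : ∫ ω, Z ω ∂μ = 0) (t : ℝ) :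
    mgf Z μ t ≤ exp (t ^ 2 * c ^ 2 / 2) := by
  have hZint : Integrable Z μ := by
    refine ⟨hZ.aestronglyMeasurable, ?_⟩
    exact HasFiniteIntegral.of_bounded (C := c) (ae_of_all _ fun ω => hb ω)
  have hpt : ∀ ω, exp (t * Z ω) ≤
      ((c - Z ω) / (2 * c)) * exp (t * (-c)) + ((c + Z ω) / (2 * c)) * exp (t * c) := by
    intro ω
    have h1 : |Z ω| ≤ c := hb ω
    have ha : 0 ≤ (c - Z ω) / (2 * c) := by
      apply div_nonneg _ (by linarith)
      have := (abs_le.1 h1).2; linarith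
    have hbnn : 0 ≤ (c + Z ω) / (2 * c) := by
      apply div_nonneg _ (by linarith)
      have := (abs_le.1 h1).1; linarith
    have hab : (c - Z ω) / (2 * c) + (c + Z ω) / (2 * c) = 1 := by
      field_simp; ring
    have hcomb : ((c - Z ω) / (2 * c)) • (t * (-c)) + ((c + Z ω) / (2 * c)) • (t * c)
        = t * Z ω := by
      simp only [smul_eq_mul]; field_simp; ring
    have := convexOn_exp.2 (Set.mem_univ (t * (-c))) (Set.mem_univ (t * c)) ha hbnn hab
    rw [hcomb] at this
    simpa [smul_eq_mul] using this
  have isub : Integrable (fun ω => c - Z ω) μ :=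
    ((integrable_const c).sub hZint).congr (ae_of_all _ fun ω => rfl)
  have iadd : Integrable (fun ω => c + Z ω) μ :=
    ((integrable_const c).add hZint).congr (ae_of_all _ fun ω => rfl)
  have i1 : Integrable (fun ω => ((c - Z ω) / (2 * c)) * exp (t * (-c))) μ :=
    (isub.div_const _).mul_const _
  have i2 : Integrable (fun ω => ((c + Z ω) / (2 * c)) * exp (t * c)) μ :=
    (iadd.div_const _).mul_const _
  have hint1 : Integrable (fun ω => ((c - Z ω) / (2 * c)) * exp (t * (-c))
      + ((c + Z ω) / (2 * c)) * exp (t * c)) μ := i1.add i2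
  have hmg : mgf Z μ t ≤ ∫ ω, (((c - Z ω) / (2 * c)) * exp (t * (-c))
      + ((c + Z ω) / (2 * c)) * exp (t * c)) ∂μ := by
    refine integral_mono (integrable_exp_of_bounded hZ hb t) hint1 hpt
  have hval : ∫ ω, (((c - Z ω) / (2 * c)) * exp (t * (-c))
      + ((c + Z ω) / (2 * c)) * exp (t * c)) ∂μ = cosh (t * c) := by
    rw [integral_add i1 i2,
      integral_mul_const, integral_mul_const, integral_div, integral_div,
      integral_sub (integrable_const c) hZint, integral_add (integrable_const c) hZint,
      hmean, integral_const]
    simp only [measure_univ, probReal_univ, ENNReal.toReal_one, smul_eq_mul, one_mul, sub_zero, add_zero]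
    rw [Real.cosh_eq]
    have hc2 : (2 : ℝ) * c ≠ 0 := by positivity
    field_simp
    ring
  calc mgf Z μ t ≤ cosh (t * c) := hval ▸ hmg
    _ ≤ exp ((t * c) ^ 2 / 2) := cosh_le_exp_half_sq _
    _ = exp (t ^ 2 * c ^ 2 / 2) := by rw [mul_pow]

/-- Two-sided Hoeffding-type bound. -/
lemma hoeffding_tail {Ω : Type*} [MeasurableSpace Ω] (μ : Measure Ω)
    [IsProbabilityMeasure μ] (Z : ℕ → Ω → ℝ) (hmeas : ∀ i, Measurable (Z i))
    (hindep : iIndepFun Z μ) (c : ℝ) (hc : 0 < c)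
    (hb : ∀ i ω, |Z i ω| ≤ c) (hmean : ∀ i, ∫ ω, Z i ω ∂μ = 0)
    (N : ℕ) (hN : 1 ≤ N) (t : ℝ) (ht : 0 < t) :
    μ {ω | (N : ℝ) * t ≤ ∑ i ∈ range N, Z i ω} +
      μ {ω | ∑ i ∈ range N, Z i ω ≤ -((N : ℝ) * t)} ≤
      ENNReal.ofReal (2 * exp (-((N : ℝ) * t ^ 2) / (2 * c ^ 2))) := by
  set W : Ω → ℝ := fun ω => ∑ i ∈ range N, Z i ω with hW
  have hWmeas : Measurable W := by
    apply Finset.measurable_sum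
    intro i _; exact hmeas i
  have hWb : ∀ ω, |W ω| ≤ N * c := by
    intro ω
    calc |W ω| ≤ ∑ i ∈ range N, |Z i ω| := Finset.abs_sum_le_sum_abs _ _
      _ ≤ ∑ _i ∈ range N, c := Finset.sum_le_sum fun i _ => hb i ω
      _ = N * c := by simp [mul_comm]
  have hWsum : W = ∑ i ∈ range N, Z i := by
    funext ω; simp [hW]
  have hmgf : ∀ lam : ℝ, mgf W μ lam ≤ exp ((N : ℝ) * (lam ^ 2 * c ^ 2 / 2)) := by
    intro lam
    rw [hWsum, hindep.mgf_sum hmeas]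
    calc ∏ i ∈ range N, mgf (Z i) μ lam
        ≤ ∏ _i ∈ range N, exp (lam ^ 2 * c ^ 2 / 2) := by
          apply Finset.prod_le_prod
          · intro i _; exact mgf_nonneg
          · intro i _; exact mgf_le_of_bounded (hmeas i) hc (hb i) (hmean i) lam
      _ = exp ((N : ℝ) * (lam ^ 2 * c ^ 2 / 2)) := by
          rw [Finset.prod_const, ← Real.exp_nat_mul]; simp
  have hlam : (0:ℝ) < t / c ^ 2 := by positivity
  have hexp_bound : exp (-(t / c ^ 2) * ((N : ℝ) * t) + (N : ℝ) * ((t / c ^ 2) ^ 2 * c ^ 2 / 2))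
      = exp (-((N : ℝ) * t ^ 2) / (2 * c ^ 2)) := by
    congr 1
    field_simp
    ring
  have hup : (μ {ω | (N : ℝ) * t ≤ W ω}).toReal ≤ exp (-((N : ℝ) * t ^ 2) / (2 * c ^ 2)) := by
    calc (μ {ω | (N : ℝ) * t ≤ W ω}).toReal
        ≤ exp (-(t / c ^ 2) * ((N : ℝ) * t)) * mgf W μ (t / c ^ 2) :=
          measure_ge_le_exp_mul_mgf _ hlam.le (integrable_exp_of_bounded hWmeas hWb _)
      _ ≤ exp (-(t / c ^ 2) * ((N : ℝ) * t)) * exp ((N : ℝ) * ((t / c ^ 2) ^ 2 * c ^ 2 / 2)) :=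
          mul_le_mul_of_nonneg_left (hmgf _) (exp_pos _).le
      _ = exp (-((N : ℝ) * t ^ 2) / (2 * c ^ 2)) := by rw [← Real.exp_add, hexp_bound]
  have hexp_bound2 : exp (-(-(t / c ^ 2)) * (-((N : ℝ) * t)) + (N : ℝ) * ((-(t / c ^ 2)) ^ 2 * c ^ 2 / 2))
      = exp (-((N : ℝ) * t ^ 2) / (2 * c ^ 2)) := by
    congr 1
    field_simp
    ring
  have hlo : (μ {ω | W ω ≤ -((N : ℝ) * t)}).toReal ≤ exp (-((N : ℝ) * t ^ 2) / (2 * c ^ 2)) := by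
    calc (μ {ω | W ω ≤ -((N : ℝ) * t)}).toReal
        ≤ exp (-(-(t / c ^ 2)) * (-((N : ℝ) * t))) * mgf W μ (-(t / c ^ 2)) :=
          measure_le_le_exp_mul_mgf _ (by linarith) (integrable_exp_of_bounded hWmeas hWb _)
      _ ≤ exp (-(-(t / c ^ 2)) * (-((N : ℝ) * t))) * exp ((N : ℝ) * ((-(t / c ^ 2)) ^ 2 * c ^ 2 / 2)) :=
          mul_le_mul_of_nonneg_left (hmgf _) (exp_pos _).le
      _ = exp (-((N : ℝ) * t ^ 2) / (2 * c ^ 2)) := by rw [← Real.exp_add, hexp_bound2]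
  have h1 : μ {ω | (N : ℝ) * t ≤ W ω} ≤ ENNReal.ofReal (exp (-((N : ℝ) * t ^ 2) / (2 * c ^ 2))) := by
    rw [← ENNReal.ofReal_toReal (measure_ne_top μ _)]
    exact ENNReal.ofReal_le_ofReal hup
  have h2 : μ {ω | W ω ≤ -((N : ℝ) * t)} ≤ ENNReal.ofReal (exp (-((N : ℝ) * t ^ 2) / (2 * c ^ 2))) := by
    rw [← ENNReal.ofReal_toReal (measure_ne_top μ _)]
    exact ENNReal.ofReal_le_ofReal hlo
  calc μ {ω | (N : ℝ) * t ≤ W ω} + μ {ω | W ω ≤ -((N : ℝ) * t)}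
      ≤ ENNReal.ofReal (exp (-((N : ℝ) * t ^ 2) / (2 * c ^ 2))) +
        ENNReal.ofReal (exp (-((N : ℝ) * t ^ 2) / (2 * c ^ 2))) := add_le_add h1 h2
    _ = ENNReal.ofReal (2 * exp (-((N : ℝ) * t ^ 2) / (2 * c ^ 2))) := by
        rw [← ENNReal.ofReal_add (exp_pos _).le (exp_pos _).le]; ring_nf



lemma supNorm_le_iff (f : S → A → ℝ) (t : ℝ) :
    supNorm f ≤ t ↔ ∀ s a, |f s a| ≤ t := by
  unfold supNorm
  rw [Finset.sup'_le_iff]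
  exact ⟨fun h s a => h (s, a) (mem_univ _), fun h p _ => h p.1 p.2⟩

lemma abs_vmax_sub_le (u v : S → A → ℝ) {B : ℝ} (h : ∀ s a, |u s a - v s a| ≤ B)
    (s' : S) : |vmax u s' - vmax v s'| ≤ B := by
  rw [abs_sub_le_iff]
  constructor
  · rw [sub_le_iff_le_add]
    apply Finset.sup'_le
    intro a _
    have h1 := (abs_le.1 (h s' a)).2
    have h2 : v s' a ≤ vmax v s' := Finset.le_sup' (v s') (mem_univ a)
    linarith
  · rw [sub_le_iff_le_add]
    apply Finset.sup'_le
    intro a _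
    have h1 := (abs_le.1 (h s' a)).1
    have h2 : u s' a ≤ vmax u s' := Finset.le_sup' (u s') (mem_univ a)
    linarith

set_option maxHeartbeats 1000000 in
/-- Lemma 1(a): high-probability bound on the recentering noise `V°`. -/
theorem stmt8 :
    ∀ (S A : Type) [Fintype S] [Fintype A] [Nonempty S] [Nonempty A]
      [MeasurableSpace S] [MeasurableSingletonClass S]
      (M : MDP S A) (γ : ℝ), 0 < γ → γ < 1 →
      ∀ θstar : S → A → ℝ, bellman M γ θstar = θstar →
      ∀ δ : ℝ, 0 < δ → δ < 1 → ∀ Mep : ℕ, 1 ≤ Mep → ∀ B : ℝ, 0 < B →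
      ∀ θbar : S → A → ℝ, supNorm (fun s a => θbar s a - θstar s a) ≤ B →
      ∀ (Ω : Type) [MeasurableSpace Ω] (μ : Measure Ω) [IsProbabilityMeasure μ]
        (N : ℕ), 1 ≤ N →
      ∀ Y : ℕ → Ω → S → A → S,
        (∀ i, IsSample μ M (Y i)) →
        iIndepFun
          (fun p : ℕ × S × A => fun ω => Y p.1 ω p.2.1 p.2.2) μ →
      ENNReal.ofReal (1 - δ / (3 * Mep)) ≤
        μ {ω | supNorm (fun s a =>
            (mcBellman M γ N (fun i => Y i ω) θbar s a -
                mcBellman M γ N (fun i => Y i ω) θstar s a) -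
              (bellman M γ θbar s a - bellman M γ θstar s a)) ≤
          4 * B * Real.sqrt (Real.log ((8 : ℝ) * Mep *
              (Fintype.card S * Fintype.card A) / δ) / N)} := by
  intro S A _ _ _ _ _ _ M γ hγ0 hγ1 θstar hfix δ hδ0 hδ1 Mep hMep B hB θbar hθbar
    Ω _ μ _ N hN Y hY hYindep
  classical
  -- basic quantities
  set D : ℝ := (Fintype.card S : ℝ) * (Fintype.card A : ℝ) with hD
  have hD1 : 1 ≤ D := by
    have h1 : 1 ≤ Fintype.card S := Fintype.card_pos
    have h2 : 1 ≤ Fintype.card A := Fintype.card_pos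
    have : (1 : ℝ) ≤ (Fintype.card S : ℝ) := by exact_mod_cast h1
    have : (1 : ℝ) ≤ (Fintype.card A : ℝ) := by exact_mod_cast h2
    nlinarith [show (1:ℝ) ≤ (Fintype.card S : ℝ) from by exact_mod_cast h1]
  have hMep1 : (1 : ℝ) ≤ (Mep : ℝ) := by exact_mod_cast hMep
  have hN1 : (1 : ℝ) ≤ (N : ℝ) := by exact_mod_cast hN
  set L : ℝ := Real.log ((8 : ℝ) * Mep * (Fintype.card S * Fintype.card A) / δ) with hL
  have hargpos : (0 : ℝ) < (8 : ℝ) * Mep * (Fintype.card S * Fintype.card A) / δ := by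
    apply div_pos _ hδ0
    have : (0:ℝ) < D := by linarith
    rw [hD] at this
    nlinarith
  have hLpos : 0 < L := by
    rw [hL]
    apply Real.log_pos
    rw [lt_div_iff₀ hδ0]
    have : δ * 1 < 1 * 1 := by nlinarith
    nlinarith [hD1, hMep1]
  set tb : ℝ := 4 * B * Real.sqrt (L / N) with htb
  have htbpos : 0 < tb := by
    rw [htb]
    have : 0 < Real.sqrt (L / N) := Real.sqrt_pos.2 (by positivity)
    positivity
  -- per-pair random variables
  set g : S × A → S → ℝ := fun p s' => γ * (vmax θbar s' - vmax θstar s') with hg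
  set m : S × A → ℝ := fun p => ∑ s', M.P p.1 p.2 s' * g p s' with hm
  set Z : S × A → ℕ → Ω → ℝ := fun p i ω => g p (Y i ω p.1 p.2) - m p with hZ
  have hvb : ∀ s', |vmax θbar s' - vmax θstar s'| ≤ B := by
    apply abs_vmax_sub_le
    intro s a
    exact (supNorm_le_iff _ _).1 hθbar s a
  have hgb : ∀ p s', |g p s'| ≤ B := by
    intro p s'
    rw [hg]
    simp only [abs_mul, abs_of_pos hγ0]
    calc γ * |vmax θbar s' - vmax θstar s'| ≤ 1 * B := by
          apply mul_le_mul hγ1.le (hvb s') (abs_nonneg _) zero_le_one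
      _ = B := one_mul B
  have hmb : ∀ p, |m p| ≤ B := by
    intro p
    rw [hm]
    calc |∑ s', M.P p.1 p.2 s' * g p s'| ≤ ∑ s', |M.P p.1 p.2 s' * g p s'| :=
          Finset.abs_sum_le_sum_abs _ _
      _ ≤ ∑ s', M.P p.1 p.2 s' * B := by
          apply Finset.sum_le_sum
          intro s' _
          rw [abs_mul, abs_of_nonneg (M.P_nonneg _ _ _)]
          exact mul_le_mul_of_nonneg_left (hgb p s') (M.P_nonneg _ _ _)
      _ = B := by rw [← Finset.sum_mul, M.P_sum_one, one_mul]
  have hZb : ∀ p i ω, |Z p i ω| ≤ 2 * B := by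
    intro p i ω
    rw [hZ]
    calc |g p (Y i ω p.1 p.2) - m p| ≤ |g p (Y i ω p.1 p.2)| + |m p| := by
          rw [sub_eq_add_neg]
          exact (abs_add_le _ _).trans_eq (by rw [abs_neg])
      _ ≤ B + B := add_le_add (hgb p _) (hmb p)
      _ = 2 * B := by ring
  have hZmeas : ∀ p i, Measurable (Z p i) := by
    intro p i
    rw [hZ]
    exact ((measurable_of_finite (g p)).comp ((hY i).1 p.1 p.2)).sub measurable_const
  have hZmean : ∀ p i, ∫ ω, Z p i ω ∂μ = 0 := by
    intro p i
    rw [hZ]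
    simp only
    rw [integral_sub _ (integrable_const _)]
    · rw [integral_comp_finite μ _ ((hY i).1 p.1 p.2) (g p) (M.P p.1 p.2)
        (M.P_nonneg p.1 p.2) ((hY i).2 p.1 p.2), integral_const]
      simp [hm]
    · refine ⟨((measurable_of_finite (g p)).comp ((hY i).1 p.1 p.2)).aestronglyMeasurable, ?_⟩
      exact HasFiniteIntegral.of_bounded (C := B) (ae_of_all _ fun ω => hgb p _)
  have hZindep : ∀ p : S × A, iIndepFun (Z p) μ := by
    intro p
    have h1 := iIndepFun_precomp_of_injective hYindep (fun i => (i, p.1, p.2))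
      (fun a b hab => by simpa using congrArg Prod.fst hab)
    have h2 := h1.comp (fun _ => fun x : S => g p x - m p)
      (fun _ => measurable_of_finite _)
    exact h2
  -- identification of the noise with the average of Z
  have hkey : ∀ ω s a,
      (mcBellman M γ N (fun i => Y i ω) θbar s a -
          mcBellman M γ N (fun i => Y i ω) θstar s a) -
        (bellman M γ θbar s a - bellman M γ θstar s a) =
      (N : ℝ)⁻¹ * ∑ i ∈ range N, Z (s, a) i ω := by
    intro ω s a
    have hNne : (N : ℝ) ≠ 0 := by positivity
    have hbell : bellman M γ θbar s a - bellman M γ θstar s a = m (s, a) := by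
      simp only [bellman, hm, hg]
      have hterm : ∀ s' : S, M.P s a s' * (γ * (vmax θbar s' - vmax θstar s')) =
          γ * (M.P s a s' * vmax θbar s') - γ * (M.P s a s' * vmax θstar s') :=
        fun s' => by ring
      rw [Finset.sum_congr rfl fun s' _ => hterm s', Finset.sum_sub_distrib,
        ← Finset.mul_sum, ← Finset.mul_sum]
      ring
    have hmc : mcBellman M γ N (fun i => Y i ω) θbar s a -
        mcBellman M γ N (fun i => Y i ω) θstar s a =
        (N : ℝ)⁻¹ * ∑ i ∈ range N, g (s, a) (Y i ω s a) := by
      simp only [mcBellman, empBellman]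
      rw [← mul_sub, ← Finset.sum_sub_distrib]
      congr 1
      apply Finset.sum_congr rfl
      intro i _
      simp only [hg]
      ring
    rw [hbell, hmc]
    have : ∑ i ∈ range N, Z (s, a) i ω =
        (∑ i ∈ range N, g (s, a) (Y i ω s a)) - N * m (s, a) := by
      simp only [hZ]
      rw [Finset.sum_sub_distrib, Finset.sum_const, Finset.card_range]
      simp [nsmul_eq_mul]
    rw [this, mul_sub]
    congr 1
    field_simp
  -- tail bound value
  have hcval : -((N : ℝ) * tb ^ 2) / (2 * (2 * B) ^ 2) = -(2 * L) := by
    rw [htb]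
    rw [mul_pow, mul_pow, Real.sq_sqrt (by positivity : (0:ℝ) ≤ L / N)]
    field_simp
    ring
  have hexpval : 2 * exp (-((N : ℝ) * tb ^ 2) / (2 * (2 * B) ^ 2)) =
      δ ^ 2 / (32 * (Mep : ℝ) ^ 2 * D ^ 2) := by
    rw [hcval]
    have hexpL : exp L = (8 : ℝ) * Mep * (Fintype.card S * Fintype.card A) / δ :=
      Real.exp_log hargpos
    have h8MD : (8 : ℝ) * Mep * (Fintype.card S * Fintype.card A) = 8 * Mep * D := by
      rw [hD]
    rw [show -(2 * L) = -L + -L by ring, Real.exp_add, Real.exp_neg, hexpL, h8MD]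
    have hMDne : (8 : ℝ) * Mep * D / δ ≠ 0 := by
      rw [← h8MD]; positivity
    field_simp
    ring
  -- union bound
  set tail : S × A → Set Ω := fun p =>
    {ω | (N : ℝ) * tb ≤ ∑ i ∈ range N, Z p i ω} ∪
      {ω | ∑ i ∈ range N, Z p i ω ≤ -((N : ℝ) * tb)} with htail
  have htailb : ∀ p, μ (tail p) ≤
      ENNReal.ofReal (δ ^ 2 / (32 * (Mep : ℝ) ^ 2 * D ^ 2)) := by
    intro p
    calc μ (tail p) ≤ μ {ω | (N : ℝ) * tb ≤ ∑ i ∈ range N, Z p i ω} +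
          μ {ω | ∑ i ∈ range N, Z p i ω ≤ -((N : ℝ) * tb)} := measure_union_le _ _
      _ ≤ ENNReal.ofReal (2 * exp (-((N : ℝ) * tb ^ 2) / (2 * (2 * B) ^ 2))) :=
          hoeffding_tail μ (Z p) (hZmeas p) (hZindep p) (2 * B) (by linarith)
            (hZb p) (hZmean p) N hN tb htbpos
      _ = ENNReal.ofReal (δ ^ 2 / (32 * (Mep : ℝ) ^ 2 * D ^ 2)) := by rw [hexpval]
  set E : Set Ω := {ω | supNorm (fun s a =>
      (mcBellman M γ N (fun i => Y i ω) θbar s a -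
          mcBellman M γ N (fun i => Y i ω) θstar s a) -
        (bellman M γ θbar s a - bellman M γ θstar s a)) ≤ tb} with hE
  have hincl : Eᶜ ⊆ ⋃ p : S × A, tail p := by
    intro ω hω
    simp only [hE, Set.mem_compl_iff, Set.mem_setOf_eq, not_le] at hω
    have : ∃ p : S × A, tb < |(N : ℝ)⁻¹ * ∑ i ∈ range N, Z p i ω| := by
      by_contra hcon
      push_neg at hcon
      have : supNorm (fun s a =>
          (mcBellman M γ N (fun i => Y i ω) θbar s a -
              mcBellman M γ N (fun i => Y i ω) θstar s a) -
            (bellman M γ θbar s a - bellman M γ θstar s a)) ≤ tb := by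
        rw [supNorm_le_iff]
        intro s a
        rw [hkey ω s a]
        exact hcon (s, a)
      linarith
    obtain ⟨p, hp⟩ := this
    refine Set.mem_iUnion.2 ⟨p, ?_⟩
    have hNpos : (0 : ℝ) < N := by linarith
    rw [htail]
    have hWeq : (N : ℝ) * ((N : ℝ)⁻¹ * ∑ i ∈ range N, Z p i ω) = ∑ i ∈ range N, Z p i ω := by
      field_simp
    rcases lt_abs.1 hp with hcase | hcase
    · left
      have := mul_lt_mul_of_pos_left hcase hNpos
      rw [hWeq] at this
      exact le_of_lt this
    · right
      have := mul_lt_mul_of_pos_left hcase hNpos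
      rw [mul_neg, hWeq] at this
      have : ∑ i ∈ range N, Z p i ω ≤ -((N : ℝ) * tb) := by linarith
      exact this
  -- complement bound
  have hq : ENNReal.ofReal (D * (δ ^ 2 / (32 * (Mep : ℝ) ^ 2 * D ^ 2))) ≤
      ENNReal.ofReal (δ / (3 * Mep)) := by
    apply ENNReal.ofReal_le_ofReal
    have hDpos : (0:ℝ) < D := by linarith
    have hMpos : (0:ℝ) < (Mep : ℝ) := by linarith
    have h1 : D * (δ ^ 2 / (32 * (Mep : ℝ) ^ 2 * D ^ 2)) = δ ^ 2 / (32 * (Mep : ℝ) ^ 2 * D) := by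
      field_simp
    have hden : (0:ℝ) < 32 * (Mep : ℝ) ^ 2 * D := by nlinarith
    rw [h1, div_le_div_iff₀ hden (by nlinarith : (0:ℝ) < 3 * (Mep : ℝ))]
    have hδ2 : δ ^ 2 ≤ δ := by nlinarith
    have h3 : 3 * (Mep : ℝ) ≤ 32 * (Mep : ℝ) ^ 2 * D := by nlinarith
    calc δ ^ 2 * (3 * (Mep : ℝ)) ≤ δ * (3 * (Mep : ℝ)) :=
          mul_le_mul_of_nonneg_right hδ2 (by nlinarith)
      _ ≤ δ * (32 * (Mep : ℝ) ^ 2 * D) := mul_le_mul_of_nonneg_left h3 hδ0.le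
  have hcomplb : μ Eᶜ ≤ ENNReal.ofReal (δ / (3 * Mep)) := by
    calc μ Eᶜ ≤ μ (⋃ p : S × A, tail p) := measure_mono hincl
      _ ≤ ∑' p : S × A, μ (tail p) := measure_iUnion_le _
      _ = ∑ p : S × A, μ (tail p) := tsum_fintype _
      _ ≤ ∑ _q : S × A, ENNReal.ofReal (δ ^ 2 / (32 * (Mep : ℝ) ^ 2 * D ^ 2)) :=
          Finset.sum_le_sum fun p _ => htailb p
      _ = (Fintype.card (S × A) : ENNReal) *
          ENNReal.ofReal (δ ^ 2 / (32 * (Mep : ℝ) ^ 2 * D ^ 2)) := by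
          rw [Finset.sum_const, nsmul_eq_mul]
          rfl
      _ = ENNReal.ofReal (D * (δ ^ 2 / (32 * (Mep : ℝ) ^ 2 * D ^ 2))) := by
          have hcard : (Fintype.card (S × A) : ENNReal) = ENNReal.ofReal D := by
            rw [hD, ← Nat.cast_mul, ENNReal.ofReal_natCast, Fintype.card_prod]
          rw [ENNReal.ofReal_mul (by linarith : (0:ℝ) ≤ D), hcard]
      _ ≤ ENNReal.ofReal (δ / (3 * Mep)) := hq
  have hd0 : (0:ℝ) ≤ δ / (3 * Mep) := by positivity
  calc ENNReal.ofReal (1 - δ / (3 * Mep)) = 1 - ENNReal.ofReal (δ / (3 * Mep)) := by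
        rw [ENNReal.ofReal_sub _ hd0, ENNReal.ofReal_one]
    _ ≤ μ E := by
        rw [tsub_le_iff_right]
        calc (1 : ENNReal) = μ Set.univ := (measure_univ).symm
          _ = μ (E ∪ Eᶜ) := by rw [Set.union_compl_self]
          _ ≤ μ E + μ Eᶜ := measure_union_le _ _
          _ ≤ μ E + ENNReal.ofReal (δ / (3 * Mep)) := add_le_add_right hcomplb _




end VRQ
end

section
/- There exists a universal constant c > 0 such that for any δ ∈ (0,1), any number of epochs M ≥ 1, and any N ≥ log(8MD/δ)/(1−γ)², the noise matrix V† = T̃_N(θ*) − T(θ*) satisfies ‖V†‖_∞ ≤ c·(‖σ(θ*)‖_∞ + (1−γ)·‖θ*‖_∞)·√(log(8MD/δ)/N) with probability at least 1 − δ/(3M). -/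
open MeasureTheory ProbabilityTheory Finset

namespace VRQ

variable {S A : Type} [Fintype S] [Fintype A] [Nonempty S] [Nonempty A]

lemma abs_vmax_le (θ : S → A → ℝ) (s : S) : |vmax θ s| ≤ supNorm θ := by
  obtain ⟨a, -, ha⟩ := Finset.exists_mem_eq_sup' (univ_nonempty) (θ s)
  rw [vmax, ha]
  exact abs_le_supNorm θ s a

lemma iIndep_precomp {Ω ι κ : Type*} [MeasurableSpace Ω] {μ : Measure Ω}
    {m : ι → MeasurableSpace Ω} (h : iIndep m μ)
    (φ : κ → ι) (hφ : Function.Injective φ) :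
    iIndep (fun k => m (φ k)) μ := by
  classical
  rw [iIndep_iff] at h ⊢
  intro s f hf
  rcases s.eq_empty_or_nonempty with rfl | hs
  · simpa using h ∅ (f := fun _ => Set.univ) (by simp)
  · haveI : Nonempty κ := ⟨hs.choose⟩
    have hinv : ∀ k ∈ s, f (Function.invFun φ (φ k)) = f k := fun k _ => by
      rw [Function.leftInverse_invFun hφ]
    have key := h (s.image φ) (f := fun i => f (Function.invFun φ i)) ?_
    · calc μ (⋂ k ∈ s, f k)
          = μ (⋂ i ∈ s.image φ, f (Function.invFun φ i)) := by
            rw [Finset.set_biInter_finset_image]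
            exact congrArg μ (Set.iInter₂_congr fun k hk => (hinv k hk).symm)
        _ = ∏ i ∈ s.image φ, μ (f (Function.invFun φ i)) := key
        _ = ∏ k ∈ s, μ (f k) := by
            rw [Finset.prod_image (fun a _ b _ hab => hφ hab)]
            exact Finset.prod_congr rfl fun k hk => congrArg μ (hinv k hk)
    · intro i hi
      rcases Finset.mem_image.1 hi with ⟨k, hk, rfl⟩
      simpa [Function.leftInverse_invFun hφ k] using hf k hk

lemma iIndepFun_precomp {Ω ι κ : Type*} [MeasurableSpace Ω] {μ : Measure Ω}
    {β : ι → Type*} {m : ∀ i, MeasurableSpace (β i)} {f : ∀ i, Ω → β i}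
    (h : iIndepFun (m := m) f μ) (φ : κ → ι) (hφ : Function.Injective φ) :
    iIndepFun (m := fun k => m (φ k)) (fun k => f (φ k)) μ := by
  rw [iIndepFun_iff_iIndep] at h ⊢
  exact iIndep_precomp h φ hφ

lemma integral_comp_fintype {Ω St : Type*} [MeasurableSpace Ω] [Fintype St]
    [MeasurableSpace St] [MeasurableSingletonClass St]
    (μ : Measure Ω) [IsFiniteMeasure μ] (X : Ω → St) (hX : Measurable X) (g : St → ℝ) :
    ∫ ω, g (X ω) ∂μ = ∑ s', (μ {ω | X ω = s'}).toReal * g s' := by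
  have hms : ∀ s' : St, MeasurableSet {ω | X ω = s'} := fun s' =>
    hX (measurableSet_singleton s')
  have hfun : ∀ ω, g (X ω) = ∑ s', Set.indicator {ω' | X ω' = s'} (fun _ => g s') ω := by
    intro ω
    rw [Finset.sum_eq_single (X ω)]
    · exact (Set.indicator_of_mem rfl _).symm
    · intro b _ hb
      refine Set.indicator_of_notMem ?_ _
      intro hmem
      simp only [Set.mem_setOf_eq] at hmem
      exact hb hmem.symm
    · simp
  calc ∫ ω, g (X ω) ∂μ
      = ∫ ω, ∑ s', Set.indicator {ω' | X ω' = s'} (fun _ => g s') ω ∂μ :=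
        integral_congr_ae (Filter.Eventually.of_forall hfun)
    _ = ∑ s', ∫ ω, Set.indicator {ω' | X ω' = s'} (fun _ => g s') ω ∂μ :=
        integral_finset_sum _ (fun s' _ => (integrable_const _).indicator (hms s'))
    _ = ∑ s', (μ {ω | X ω = s'}).toReal * g s' := by
        refine Finset.sum_congr rfl fun s' _ => ?_
        rw [integral_indicator_const _ (hms s')]
        simp [smul_eq_mul, measureReal_def]

lemma exp_quad_bound {x : ℝ} (hx : |x| ≤ 1) : Real.exp x ≤ 1 + x + 3 / 4 * x ^ 2 := by
  have h := Real.exp_bound hx (n := 2) (by norm_num)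
  have hsum : ∑ m ∈ Finset.range 2, x ^ m / m.factorial = 1 + x := by
    simp [Finset.sum_range_succ]
  rw [hsum] at h
  have h2 := (abs_le.1 h).2
  have habs : |x| ^ 2 = x ^ 2 := sq_abs x
  norm_num [habs] at h2
  linarith

set_option maxHeartbeats 1000000 in
/-- Bernstein-type tail bound for a single state-action entry. -/
lemma entry_bound {Ω St : Type*} [MeasurableSpace Ω] [Fintype St]
    [MeasurableSpace St] [MeasurableSingletonClass St]
    (μ : Measure Ω) [IsProbabilityMeasure μ]
    (p : St → ℝ) (hp0 : ∀ s, 0 ≤ p s) (hp1 : ∑ s, p s = 1)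
    (W : ℕ → Ω → St) (hWm : ∀ i, Measurable (W i))
    (hWd : ∀ i s', μ {ω | W i ω = s'} = ENNReal.ofReal (p s'))
    (hind : iIndepFun W μ)
    (g : St → ℝ) (b : ℝ) (hb : 0 < b) (m q : ℝ)
    (hm : m = ∑ x, p x * g x) (hq : q = ∑ x, p x * (g x - m) ^ 2)
    (hgb : ∀ s', |g s' - m| ≤ b)
    (N : ℕ) (hN : 0 < N) (L : ℝ) (hL : 0 < L) (τ : ℝ)
    (hτ : τ = Real.sqrt (q * (3 * L / N)) + 2 * b * L / N) :
    (μ {ω | (N : ℝ) * τ ≤ ∑ i ∈ Finset.range N, (g (W i ω) - m)}).toReal ≤ Real.exp (-L) := by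
  have hNr : (0 : ℝ) < N := by exact_mod_cast hN
  have hq0 : 0 ≤ q := hq ▸ Finset.sum_nonneg fun x _ => mul_nonneg (hp0 x) (sq_nonneg _)
  have h2bLN : 0 < 2 * b * L / N := by positivity
  have hτpos : 0 < τ := by
    rw [hτ]; exact add_pos_of_nonneg_of_pos (Real.sqrt_nonneg _) h2bLN
  have hτ2bLN : 2 * b * L / N ≤ τ := by
    rw [hτ]; linarith [Real.sqrt_nonneg (q * (3 * L / N))]
  set t : ℝ := if 3 * q ≤ 2 * τ * b then 1 / b else 2 * τ / (3 * q) with ht_def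
  have hqpos_of : ¬ 3 * q ≤ 2 * τ * b → 0 < q := by
    intro hcase; nlinarith [mul_pos hτpos hb]
  have htpos : 0 < t := by
    rw [ht_def]; split_ifs with hcase
    · positivity
    · have := hqpos_of hcase; positivity
  have htb : t * b ≤ 1 := by
    rw [ht_def]; split_ifs with hcase
    · rw [one_div, inv_mul_cancel₀ hb.ne']
    · have hq' := hqpos_of hcase
      rw [div_mul_eq_mul_div, div_le_one (by positivity)]
      nlinarith
  set Z : ℕ → Ω → ℝ := fun i ω => g (W i ω) - m with hZ
  have hZmeas : ∀ i, Measurable (Z i) := fun i =>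
    (measurable_of_countable (fun s' : St => g s' - m)).comp (hWm i)
  have hZind : iIndepFun Z μ :=
    hind.comp (fun _ (s' : St) => g s' - m) (fun _ => measurable_of_countable _)
  have hZbound : ∀ i ω, Z i ω ≤ b := fun i ω => (abs_le.1 (hgb _)).2
  have hsum0 : ∑ x, p x * (g x - m) = 0 := by
    have hc : ∀ x ∈ (Finset.univ : Finset St),
        p x * (g x - m) = p x * g x - m * p x := fun x _ => by ring
    rw [Finset.sum_congr rfl hc, Finset.sum_sub_distrib, ← hm, ← Finset.mul_sum, hp1]
    ring
  have hmgf : ∀ i, mgf (Z i) μ t = ∑ s', p s' * Real.exp (t * (g s' - m)) := by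
    intro i
    have hint := integral_comp_fintype μ (W i) (hWm i)
      (fun s' => Real.exp (t * (g s' - m)))
    calc mgf (Z i) μ t = ∫ ω, Real.exp (t * (g (W i ω) - m)) ∂μ := rfl
      _ = ∑ s', (μ {ω | W i ω = s'}).toReal * Real.exp (t * (g s' - m)) := hint
      _ = ∑ s', p s' * Real.exp (t * (g s' - m)) := by
          refine Finset.sum_congr rfl fun s' _ => ?_
          rw [hWd i s', ENNReal.toReal_ofReal (hp0 s')]
  have hmgf_le : ∀ i, mgf (Z i) μ t ≤ Real.exp (3 / 4 * t ^ 2 * q) := by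
    intro i
    rw [hmgf i]
    have step1 : ∑ s', p s' * Real.exp (t * (g s' - m))
        ≤ ∑ s', p s' * (1 + t * (g s' - m) + 3 / 4 * (t * (g s' - m)) ^ 2) := by
      refine Finset.sum_le_sum fun s' _ => mul_le_mul_of_nonneg_left ?_ (hp0 s')
      refine exp_quad_bound ?_
      rw [abs_mul, abs_of_pos htpos]
      calc t * |g s' - m| ≤ t * b := mul_le_mul_of_nonneg_left (hgb s') htpos.le
        _ ≤ 1 := htb
    have step2 : ∑ s', p s' * (1 + t * (g s' - m) + 3 / 4 * (t * (g s' - m)) ^ 2)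
        = 1 + 3 / 4 * t ^ 2 * q := by
      have hc : ∀ s' ∈ (Finset.univ : Finset St),
          p s' * (1 + t * (g s' - m) + 3 / 4 * (t * (g s' - m)) ^ 2)
          = p s' + t * (p s' * (g s' - m)) + 3 / 4 * t ^ 2 * (p s' * (g s' - m) ^ 2) :=
        fun s' _ => by ring
      rw [Finset.sum_congr rfl hc, Finset.sum_add_distrib, Finset.sum_add_distrib, hp1,
        ← Finset.mul_sum, ← Finset.mul_sum, hsum0, ← hq]
      ring
    have step3 : (1 : ℝ) + 3 / 4 * t ^ 2 * q ≤ Real.exp (3 / 4 * t ^ 2 * q) := by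
      have := Real.add_one_le_exp (3 / 4 * t ^ 2 * q); linarith
    exact (step1.trans_eq step2).trans step3
  set T : Ω → ℝ := ∑ i ∈ Finset.range N, Z i with hT
  have hTapp : ∀ ω, T ω = ∑ i ∈ Finset.range N, Z i ω := fun ω => by
    rw [hT]; simp
  have hTmeas : Measurable T := by
    have hTfun : T = fun ω => ∑ i ∈ Finset.range N, Z i ω := funext hTapp
    rw [hTfun]
    exact Finset.measurable_sum _ fun i _ => hZmeas i
  have hTle : ∀ ω, T ω ≤ N * b := by
    intro ω; rw [hTapp]
    calc ∑ i ∈ Finset.range N, Z i ω ≤ ∑ _i ∈ Finset.range N, b :=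
          Finset.sum_le_sum fun i _ => hZbound i ω
      _ = N * b := by simp [mul_comm]
  have hint : Integrable (fun ω => Real.exp (t * T ω)) μ := by
    refine Integrable.mono' (integrable_const (Real.exp (t * (N * b))))
      ((hTmeas.const_mul t).exp.aestronglyMeasurable)
      (Filter.Eventually.of_forall fun ω => ?_)
    rw [Real.norm_eq_abs, Real.abs_exp]
    exact Real.exp_le_exp.2 (mul_le_mul_of_nonneg_left (hTle ω) htpos.le)
  have hchern := measure_ge_le_exp_mul_mgf (μ := μ) (X := T) (t := t)
    ((N : ℝ) * τ) htpos.le hint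
  have hprod : mgf T μ t = ∏ i ∈ Finset.range N, mgf (Z i) μ t := by
    rw [hT]; exact hZind.mgf_sum hZmeas _
  have hmgfT : mgf T μ t ≤ Real.exp (3 / 4 * t ^ 2 * q) ^ N := by
    rw [hprod]
    calc ∏ i ∈ Finset.range N, mgf (Z i) μ t
        ≤ ∏ _i ∈ Finset.range N, Real.exp (3 / 4 * t ^ 2 * q) :=
          Finset.prod_le_prod (fun i _ => mgf_nonneg) (fun i _ => hmgf_le i)
      _ = _ := by simp
  have hexponent : -t * ((N : ℝ) * τ) + (N : ℝ) * (3 / 4 * t ^ 2 * q) ≤ -L := by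
    have hNτ : 2 * b * L ≤ (N : ℝ) * τ := by
      have := mul_le_mul_of_nonneg_left hτ2bLN hNr.le
      calc 2 * b * L = (N : ℝ) * (2 * b * L / N) := by field_simp
        _ ≤ (N : ℝ) * τ := this
    rw [ht_def]; split_ifs with hcase
    · -- t = 1/b
      set u : ℝ := 1 / b with hu
      have hupos : 0 < u := by rw [hu]; positivity
      have hub : u * b = 1 := by rw [hu]; field_simp
      have huu : u ^ 2 * b = u := by rw [pow_two, mul_assoc, hub, mul_one]
      have e1 : (N : ℝ) * (3 / 4 * u ^ 2 * q) ≤ (N : ℝ) * (3 / 4 * u ^ 2 * (2 * τ * b / 3)) := by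
        refine mul_le_mul_of_nonneg_left ?_ hNr.le
        refine mul_le_mul_of_nonneg_left ?_ (by positivity)
        linarith
      have e2 : (N : ℝ) * (3 / 4 * u ^ 2 * (2 * τ * b / 3)) = 1 / 2 * u * ((N : ℝ) * τ) := by
        rw [show (N : ℝ) * (3 / 4 * u ^ 2 * (2 * τ * b / 3))
            = 1 / 2 * (u ^ 2 * b) * τ * (N : ℝ) by ring, huu]
        ring
      have e3 : L = 1 / 2 * u * (2 * b * L) := by
        rw [show 1 / 2 * u * (2 * b * L) = (u * b) * L by ring, hub, one_mul]
      have e4 : 1 / 2 * u * (2 * b * L) ≤ 1 / 2 * u * ((N : ℝ) * τ) :=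
        mul_le_mul_of_nonneg_left hNτ (by positivity)
      have e5 : -u * ((N : ℝ) * τ) + 1 / 2 * u * ((N : ℝ) * τ)
          = -(1 / 2 * u * ((N : ℝ) * τ)) := by ring
      linarith
    · -- t = 2τ/(3q)
      have hq' := hqpos_of hcase
      have hsq : Real.sqrt (q * (3 * L / N)) ≤ τ := by
        rw [hτ]; linarith [h2bLN]
      have hτ2 : q * (3 * L / N) ≤ τ ^ 2 := by
        have h0 : 0 ≤ q * (3 * L / N) := by positivity
        calc q * (3 * L / N) = Real.sqrt (q * (3 * L / N)) ^ 2 := (Real.sq_sqrt h0).symm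
          _ ≤ τ ^ 2 := by
              have := Real.sqrt_nonneg (q * (3 * L / N))
              nlinarith
      have hkey : 3 * q * L ≤ (N : ℝ) * τ ^ 2 := by
        have := mul_le_mul_of_nonneg_left hτ2 hNr.le
        calc 3 * q * L = (N : ℝ) * (q * (3 * L / N)) := by field_simp
          _ ≤ (N : ℝ) * τ ^ 2 := this
      have h3q : (3 * q) ≠ 0 := by positivity
      have heq : -(2 * τ / (3 * q)) * ((N : ℝ) * τ)
          + (N : ℝ) * (3 / 4 * (2 * τ / (3 * q)) ^ 2 * q) = -((N : ℝ) * τ ^ 2) / (3 * q) := by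
        field_simp
        ring
      rw [heq, neg_div, neg_le_neg_iff, le_div_iff₀ (by positivity)]
      linarith
  have hsetEq : {ω | (N : ℝ) * τ ≤ ∑ i ∈ Finset.range N, (g (W i ω) - m)}
      = {ω | (N : ℝ) * τ ≤ T ω} := by
    ext ω; simp only [Set.mem_setOf_eq, hTapp, hZ]
  calc (μ {ω | (N : ℝ) * τ ≤ ∑ i ∈ Finset.range N, (g (W i ω) - m)}).toReal
      = (μ {ω | (N : ℝ) * τ ≤ T ω}).toReal := by rw [hsetEq]
    _ ≤ Real.exp (-t * ((N : ℝ) * τ)) * mgf T μ t := hchern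
    _ ≤ Real.exp (-t * ((N : ℝ) * τ)) * Real.exp (3 / 4 * t ^ 2 * q) ^ N :=
        mul_le_mul_of_nonneg_left hmgfT (Real.exp_nonneg _)
    _ = Real.exp (-t * ((N : ℝ) * τ) + (N : ℝ) * (3 / 4 * t ^ 2 * q)) := by
        rw [← Real.exp_nat_mul, ← Real.exp_add]
    _ ≤ Real.exp (-L) := Real.exp_le_exp.2 hexponent

set_option maxHeartbeats 4000000

/-- Lemma 1(b): high-probability bound on the recentering noise `V†`. -/
theorem stmt9 :
    ∃ c : ℝ, 0 < c ∧
      ∀ (S A : Type) [Fintype S] [Fintype A] [Nonempty S] [Nonempty A]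
        [MeasurableSpace S] [MeasurableSingletonClass S]
        (M : MDP S A) (γ : ℝ), 0 < γ → γ < 1 →
        ∀ θstar : S → A → ℝ, bellman M γ θstar = θstar →
        ∀ δ : ℝ, 0 < δ → δ < 1 → ∀ Mep : ℕ, 1 ≤ Mep →
        ∀ (Ω : Type) [MeasurableSpace Ω] (μ : Measure Ω) [IsProbabilityMeasure μ]
          (N : ℕ),
          Real.log ((8 : ℝ) * Mep * (Fintype.card S * Fintype.card A) / δ) /
              (1 - γ) ^ 2 ≤ (N : ℝ) →
        ∀ Y : ℕ → Ω → S → A → S,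
          (∀ i, IsSample μ M (Y i)) →
          iIndepFun
            (fun p : ℕ × S × A => fun ω => Y p.1 ω p.2.1 p.2.2) μ →
        ENNReal.ofReal (1 - δ / (3 * Mep)) ≤
          μ {ω | supNorm (fun s a =>
              mcBellman M γ N (fun i => Y i ω) θstar s a - bellman M γ θstar s a) ≤
            c * (supNorm (bellStd M γ θstar) + (1 - γ) * supNorm θstar) *
              Real.sqrt (Real.log ((8 : ℝ) * Mep *
                (Fintype.card S * Fintype.card A) / δ) / N)} := by
  classical
  refine ⟨4, by norm_num, ?_⟩
  intro S A _ _ _ _ _ _ M γ hγ0 hγ1 θstar hfix δ hδ0 hδ1 Mep hMep Ω _ μ _ N hNlarge Y hY hind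
  set L : ℝ := Real.log ((8 : ℝ) * Mep * (Fintype.card S * Fintype.card A) / δ) with hLdef
  have hMep1 : (1 : ℝ) ≤ Mep := by exact_mod_cast hMep
  have hcS : (1 : ℝ) ≤ Fintype.card S := by exact_mod_cast Fintype.card_pos (α := S)
  have hcA : (1 : ℝ) ≤ Fintype.card A := by exact_mod_cast Fintype.card_pos (α := A)
  have hbase : (1 : ℝ) < (8 : ℝ) * Mep * (Fintype.card S * Fintype.card A) / δ := by
    rw [lt_div_iff₀ hδ0]
    have hp1 : (1 : ℝ) ≤ (Fintype.card S : ℝ) * Fintype.card A := by nlinarith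
    have hp2 : (1 : ℝ) ≤ (Mep : ℝ) * ((Fintype.card S : ℝ) * Fintype.card A) := by nlinarith
    nlinarith
  have hL : 0 < L := Real.log_pos hbase
  have h1γ : 0 < 1 - γ := by linarith
  have hNr : (0 : ℝ) < N := by
    calc (0 : ℝ) < L / (1 - γ) ^ 2 := by positivity
      _ ≤ N := hNlarge
  have hNpos : 0 < N := by exact_mod_cast hNr
  set R : ℝ := 4 * (supNorm (bellStd M γ θstar) + (1 - γ) * supNorm θstar) *
    Real.sqrt (L / N) with hR
  clear_value L R
  have hR0 : 0 ≤ R := by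
    rw [hR]
    have h1 := supNorm_nonneg (bellStd M γ θstar)
    have h2 := supNorm_nonneg θstar
    have h3 := Real.sqrt_nonneg (L / (N : ℝ))
    have h4 : 0 ≤ (1 - γ) * supNorm θstar := mul_nonneg h1γ.le h2
    nlinarith
  by_cases hθ0 : supNorm θstar = 0
  · -- trivial case: θstar ≡ 0
    have hvz : ∀ s, vmax θstar s = 0 := by
      intro s
      have h1 := abs_vmax_le θstar s
      rw [hθ0] at h1
      exact abs_eq_zero.1 (le_antisymm h1 (abs_nonneg _))
    have hdiff0 : ∀ ω s a,
        mcBellman M γ N (fun i => Y i ω) θstar s a - bellman M γ θstar s a = 0 := by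
      intro ω s a
      simp only [mcBellman, empBellman, bellman, hvz, mul_zero, add_zero,
        Finset.sum_const, Finset.card_range, nsmul_eq_mul]
      field_simp
      ring
    have hE : {ω | supNorm (fun s a =>
        mcBellman M γ N (fun i => Y i ω) θstar s a - bellman M γ θstar s a) ≤ R}
        = Set.univ := by
      refine Set.eq_univ_of_forall fun ω => ?_
      show supNorm _ ≤ R
      refine Finset.sup'_le _ _ fun p _ => ?_
      show |mcBellman M γ N (fun i => Y i ω) θstar p.1 p.2 - bellman M γ θstar p.1 p.2| ≤ R
      rw [hdiff0 ω p.1 p.2]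
      simpa using hR0
    rw [hE, measure_univ]
    refine ENNReal.ofReal_le_one.2 ?_
    have : 0 ≤ δ / (3 * Mep) := by positivity
    linarith
  · have hθpos : 0 < supNorm θstar := lt_of_le_of_ne (supNorm_nonneg θstar) (Ne.symm hθ0)
    set g : S → ℝ := fun s' => γ * vmax θstar s' with hg
    set b : ℝ := 2 * γ * supNorm θstar with hbdef
    have hb : 0 < b := by rw [hbdef]; nlinarith
    set msa : S → A → ℝ := fun s a => ∑ s', M.P s a s' * g s' with hmdef
    set qsa : S → A → ℝ := fun s a => ∑ s', M.P s a s' * (g s' - msa s a) ^ 2 with hqdef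
    set τ : S → A → ℝ := fun s a =>
      Real.sqrt (qsa s a * (3 * L / N)) + 2 * b * L / N with hτdef
    clear_value g b msa qsa τ
    have hmsa_eq : ∀ s a, msa s a = γ * ∑ s', M.P s a s' * vmax θstar s' := by
      intro s a
      simp only [hmdef, hg]
      rw [Finset.mul_sum]
      exact Finset.sum_congr rfl fun s' _ => by ring
    have habs_g : ∀ s', |g s'| ≤ γ * supNorm θstar := by
      intro s'
      simp only [hg]
      rw [abs_mul, abs_of_pos hγ0]
      exact mul_le_mul_of_nonneg_left (abs_vmax_le θstar s') hγ0.le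
    have habs_m : ∀ s a, |msa s a| ≤ γ * supNorm θstar := by
      intro s a
      simp only [hmdef]
      calc |∑ s', M.P s a s' * g s'| ≤ ∑ s', |M.P s a s' * g s'| :=
            Finset.abs_sum_le_sum_abs _ _
        _ ≤ ∑ s', M.P s a s' * (γ * supNorm θstar) := by
            refine Finset.sum_le_sum fun s' _ => ?_
            rw [abs_mul, abs_of_nonneg (M.P_nonneg s a s')]
            exact mul_le_mul_of_nonneg_left (habs_g s') (M.P_nonneg s a s')
        _ = γ * supNorm θstar := by rw [← Finset.sum_mul, M.P_sum_one, one_mul]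
    have hgb : ∀ s a s', |g s' - msa s a| ≤ b := by
      intro s a s'
      calc |g s' - msa s a| ≤ |g s'| + |msa s a| := by
            rw [sub_eq_add_neg]
            exact (abs_add_le _ _).trans (by rw [abs_neg])
        _ ≤ γ * supNorm θstar + γ * supNorm θstar := add_le_add (habs_g s') (habs_m s a)
        _ = b := by rw [hbdef]; ring
    have hq0 : ∀ s a, 0 ≤ qsa s a := by
      intro s a
      simp only [hqdef]
      exact Finset.sum_nonneg fun s' _ => mul_nonneg (M.P_nonneg s a s') (sq_nonneg _)
    have hvar : ∀ s a, qsa s a = γ ^ 2 *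
        (∑ s', M.P s a s' * vmax θstar s' ^ 2
          - (∑ s', M.P s a s' * vmax θstar s') ^ 2) := by
      intro s a
      have h1 := M.P_sum_one s a
      have hm' := hmsa_eq s a
      simp only [hqdef, hg]
      set mv := ∑ s', M.P s a s' * vmax θstar s' with hmv
      have hc : ∀ s' ∈ (Finset.univ : Finset S),
          M.P s a s' * (γ * vmax θstar s' - msa s a) ^ 2
          = γ ^ 2 * (M.P s a s' * vmax θstar s' ^ 2)
            - (2 * γ * γ * mv) * (M.P s a s' * vmax θstar s')
            + (γ * mv) ^ 2 * M.P s a s' := by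
        intro s' _; rw [hm']; ring
      rw [Finset.sum_congr rfl hc, Finset.sum_add_distrib, Finset.sum_sub_distrib,
        ← Finset.mul_sum, ← Finset.mul_sum, ← Finset.mul_sum, h1, ← hmv]
      ring
    have hstd : ∀ s a, Real.sqrt (qsa s a) = bellStd M γ θstar s a := by
      intro s a
      rw [hvar s a]
      rfl
    have hLN : L / N ≤ (1 - γ) ^ 2 := by
      rw [div_le_iff₀ hNr]
      have h3 : (0 : ℝ) < (1 - γ) ^ 2 := by positivity
      have h6 : L ≤ N * (1 - γ) ^ 2 :=
        calc L = (L / (1 - γ) ^ 2) * (1 - γ) ^ 2 := by field_simp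
          _ ≤ N * (1 - γ) ^ 2 := mul_le_mul_of_nonneg_right hNlarge h3.le
      linarith
    have hsqLN : Real.sqrt (L / N) ≤ 1 - γ := by
      calc Real.sqrt (L / (N : ℝ)) ≤ Real.sqrt ((1 - γ) ^ 2) := Real.sqrt_le_sqrt hLN
        _ = 1 - γ := Real.sqrt_sq h1γ.le
    have hsqLN0 : 0 ≤ Real.sqrt (L / (N : ℝ)) := Real.sqrt_nonneg _
    have hLNval : L / (N : ℝ) = Real.sqrt (L / N) * Real.sqrt (L / N) :=
      (Real.mul_self_sqrt (by positivity)).symm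
    have hτR : ∀ s a, τ s a ≤ R := by
      intro s a
      have hsqrt3 : Real.sqrt 3 ≤ 2 := by
        have h34 : Real.sqrt 3 ≤ Real.sqrt 4 := Real.sqrt_le_sqrt (by norm_num)
        have h4 : Real.sqrt 4 = 2 := by
          rw [show (4 : ℝ) = 2 ^ 2 by norm_num, Real.sqrt_sq (by norm_num : (0:ℝ) ≤ 2)]
        linarith
      have hstd_le : Real.sqrt (qsa s a) ≤ supNorm (bellStd M γ θstar) := by
        rw [hstd s a]
        exact le_trans (le_abs_self _) (abs_le_supNorm _ s a)
      have t1 : Real.sqrt (qsa s a * (3 * L / N))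
          ≤ 2 * supNorm (bellStd M γ θstar) * Real.sqrt (L / N) := by
        rw [show qsa s a * (3 * L / (N : ℝ)) = qsa s a * (3 * (L / N)) by ring,
          Real.sqrt_mul (hq0 s a), Real.sqrt_mul (by norm_num : (0:ℝ) ≤ 3)]
        calc Real.sqrt (qsa s a) * (Real.sqrt 3 * Real.sqrt (L / N))
            ≤ supNorm (bellStd M γ θstar) * (2 * Real.sqrt (L / N)) := by
              refine mul_le_mul hstd_le ?_ (by positivity) (supNorm_nonneg _)
              exact mul_le_mul_of_nonneg_right hsqrt3 hsqLN0
          _ = 2 * supNorm (bellStd M γ θstar) * Real.sqrt (L / N) := by ring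
      have hble : b ≤ 2 * supNorm θstar := by
        rw [hbdef]; nlinarith
      have t2 : 2 * b * L / N ≤ 4 * ((1 - γ) * supNorm θstar) * Real.sqrt (L / N) := by
        have hbs : b * Real.sqrt (L / (N : ℝ)) ≤ 2 * supNorm θstar * (1 - γ) :=
          mul_le_mul hble hsqLN hsqLN0 (by positivity)
        have hself : Real.sqrt (L / (N : ℝ)) * Real.sqrt (L / (N : ℝ)) = L / N :=
          Real.mul_self_sqrt (by positivity)
        calc 2 * b * L / (N : ℝ) = 2 * (b * Real.sqrt (L / N)) * Real.sqrt (L / N) := by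
              rw [mul_div_assoc]
              linear_combination (-2 * b) * hself
          _ ≤ 2 * (2 * supNorm θstar * (1 - γ)) * Real.sqrt (L / N) := by
              refine mul_le_mul_of_nonneg_right ?_ hsqLN0
              linarith
          _ = 4 * ((1 - γ) * supNorm θstar) * Real.sqrt (L / N) := by ring
      have ht := add_le_add t1 t2
      have hRexp : R = 4 * supNorm (bellStd M γ θstar) * Real.sqrt (L / (N : ℝ))
          + 4 * ((1 - γ) * supNorm θstar) * Real.sqrt (L / N) := by rw [hR]; ring
      have h5 : 0 ≤ supNorm (bellStd M γ θstar) * Real.sqrt (L / (N : ℝ)) :=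
        mul_nonneg (supNorm_nonneg _) hsqLN0
      simp only [hτdef]
      rw [hRexp]
      linarith [ht, h5]
    have hdiff : ∀ ω s a,
        mcBellman M γ N (fun i => Y i ω) θstar s a - bellman M γ θstar s a
        = (N : ℝ)⁻¹ * ∑ i ∈ Finset.range N, (g (Y i ω s a) - msa s a) := by
      intro ω s a
      simp only [mcBellman, empBellman, bellman, hg]
      rw [Finset.sum_add_distrib, Finset.sum_const, Finset.card_range, nsmul_eq_mul,
        Finset.sum_sub_distrib, Finset.sum_const, Finset.card_range, nsmul_eq_mul,
        hmsa_eq s a]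
      have hNinv : (N : ℝ)⁻¹ * N = 1 := inv_mul_cancel₀ hNr.ne'
      linear_combination (M.r s a + γ * ∑ s', M.P s a s' * vmax θstar s') * hNinv
    have hindsub : ∀ s a,
        iIndepFun (fun i ω => Y i ω s a) μ := by
      intro s a
      exact iIndepFun_precomp hind (fun i : ℕ => (i, s, a))
        (fun i j hij => by simpa using congrArg Prod.fst hij)
    have hA : ∀ s a, (μ {ω | (N : ℝ) * τ s a
        ≤ ∑ i ∈ Finset.range N, (g (Y i ω s a) - msa s a)}).toReal ≤ Real.exp (-L) := by
      intro s a
      refine entry_bound μ (M.P s a) (M.P_nonneg s a) (M.P_sum_one s a)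
        (fun i ω => Y i ω s a) (fun i => (hY i).1 s a) (fun i s' => (hY i).2 s a s')
        (hindsub s a) g b hb (msa s a) (qsa s a) ?_ ?_ (hgb s a) N hNpos L hL (τ s a) ?_
      · simp only [hmdef]
      · simp only [hqdef]
      · simp only [hτdef]
    have hB : ∀ s a, (μ {ω | (N : ℝ) * τ s a
        ≤ ∑ i ∈ Finset.range N, ((fun s' => -g s') (Y i ω s a) - -(msa s a))}).toReal
        ≤ Real.exp (-L) := by
      intro s a
      refine entry_bound μ (M.P s a) (M.P_nonneg s a) (M.P_sum_one s a)
        (fun i ω => Y i ω s a) (fun i => (hY i).1 s a) (fun i s' => (hY i).2 s a s')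
        (hindsub s a) (fun s' => -g s') b hb (-(msa s a)) (qsa s a) ?_ ?_ ?_
        N hNpos L hL (τ s a) ?_
      · simp only [hmdef]
        rw [show (∑ x, M.P s a x * -(g x)) = ∑ x, -(M.P s a x * g x) from
          Finset.sum_congr rfl fun x _ => by ring, Finset.sum_neg_distrib]
      · simp only [hqdef]
        exact Finset.sum_congr rfl fun x _ => by ring
      · intro s'
        rw [show -g s' - -(msa s a) = -(g s' - msa s a) by ring, abs_neg]
        exact hgb s a s'
      · simp only [hτdef]
    have hsub : {ω | supNorm (fun s a =>
        mcBellman M γ N (fun i => Y i ω) θstar s a - bellman M γ θstar s a) ≤ R}ᶜ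
        ⊆ ⋃ p ∈ (Finset.univ : Finset (S × A)),
          ({ω | (N : ℝ) * τ p.1 p.2
              ≤ ∑ i ∈ Finset.range N, (g (Y i ω p.1 p.2) - msa p.1 p.2)}
            ∪ {ω | (N : ℝ) * τ p.1 p.2
              ≤ ∑ i ∈ Finset.range N,
                ((fun s' => -g s') (Y i ω p.1 p.2) - -(msa p.1 p.2))}) := by
      intro ω hω
      simp only [Set.mem_compl_iff, Set.mem_setOf_eq, not_le] at hω
      rw [supNorm, Finset.lt_sup'_iff] at hω
      obtain ⟨p, -, hp⟩ := hω
      have hτp := hτR p.1 p.2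
      rw [hdiff ω p.1 p.2] at hp
      set X := ∑ i ∈ Finset.range N, (g (Y i ω p.1 p.2) - msa p.1 p.2) with hX
      rw [abs_mul, abs_of_pos (inv_pos.2 hNr)] at hp
      have hNX : (N : ℝ) * τ p.1 p.2 ≤ |X| := by
        have h1 : τ p.1 p.2 ≤ (N : ℝ)⁻¹ * |X| := le_of_lt (lt_of_le_of_lt hτp hp)
        calc (N : ℝ) * τ p.1 p.2 ≤ (N : ℝ) * ((N : ℝ)⁻¹ * |X|) :=
              mul_le_mul_of_nonneg_left h1 hNr.le
          _ = |X| := by field_simp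
      refine Set.mem_biUnion (Finset.mem_univ p) ?_
      rcases le_abs.1 hNX with hpos | hneg
      · exact Or.inl hpos
      · refine Or.inr ?_
        show (N : ℝ) * τ p.1 p.2 ≤ ∑ i ∈ Finset.range N,
          ((fun s' => -g s') (Y i ω p.1 p.2) - -(msa p.1 p.2))
        have hXneg : ∑ i ∈ Finset.range N,
            ((fun s' => -g s') (Y i ω p.1 p.2) - -(msa p.1 p.2)) = -X := by
          rw [hX, ← Finset.sum_neg_distrib]
          exact Finset.sum_congr rfl fun i _ => by ring
        rw [hXneg]
        exact hneg
    have toE : ∀ s : Set Ω, (μ s).toReal ≤ Real.exp (-L)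
        → μ s ≤ ENNReal.ofReal (Real.exp (-L)) := by
      intro s h
      rw [← ENNReal.ofReal_toReal (measure_ne_top μ s)]
      exact ENNReal.ofReal_le_ofReal h
    have hMne : (Mep : ℝ) ≠ 0 := ne_of_gt (by linarith)
    have hcSne : ((Fintype.card S : ℕ) : ℝ) ≠ 0 := ne_of_gt (by linarith)
    have hcAne : ((Fintype.card A : ℕ) : ℝ) ≠ 0 := ne_of_gt (by linarith)
    have hexpL : Real.exp (-L)
        = δ / ((8 : ℝ) * Mep * (Fintype.card S * Fintype.card A)) := by
      have h8 : (0 : ℝ) < (8 : ℝ) * Mep * (Fintype.card S * Fintype.card A) / δ := by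
        apply div_pos ?_ hδ0
        exact mul_pos (mul_pos (by norm_num : (0:ℝ) < 8) (by linarith : (0:ℝ) < (Mep:ℝ)))
          (mul_pos (by linarith : (0:ℝ) < ((Fintype.card S : ℕ) : ℝ))
            (by linarith : (0:ℝ) < ((Fintype.card A : ℕ) : ℝ)))
      rw [hLdef, Real.exp_neg, Real.exp_log h8, inv_div]
    have hcompl : μ ({ω | supNorm (fun s a =>
        mcBellman M γ N (fun i => Y i ω) θstar s a - bellman M γ θstar s a) ≤ R}ᶜ)
        ≤ ENNReal.ofReal (δ / (4 * Mep)) := by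
      calc μ ({ω | supNorm (fun s a =>
            mcBellman M γ N (fun i => Y i ω) θstar s a - bellman M γ θstar s a) ≤ R}ᶜ)
          ≤ μ (⋃ p ∈ (Finset.univ : Finset (S × A)),
            ({ω | (N : ℝ) * τ p.1 p.2
                ≤ ∑ i ∈ Finset.range N, (g (Y i ω p.1 p.2) - msa p.1 p.2)}
              ∪ {ω | (N : ℝ) * τ p.1 p.2
                ≤ ∑ i ∈ Finset.range N,
                  ((fun s' => -g s') (Y i ω p.1 p.2) - -(msa p.1 p.2))})) :=
            measure_mono hsub
        _ ≤ ∑ p ∈ (Finset.univ : Finset (S × A)), μ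
            ({ω | (N : ℝ) * τ p.1 p.2
                ≤ ∑ i ∈ Finset.range N, (g (Y i ω p.1 p.2) - msa p.1 p.2)}
              ∪ {ω | (N : ℝ) * τ p.1 p.2
                ≤ ∑ i ∈ Finset.range N,
                  ((fun s' => -g s') (Y i ω p.1 p.2) - -(msa p.1 p.2))}) :=
            measure_biUnion_finset_le _ _
        _ ≤ ∑ _p ∈ (Finset.univ : Finset (S × A)),
            (ENNReal.ofReal (Real.exp (-L)) + ENNReal.ofReal (Real.exp (-L))) := by
            refine Finset.sum_le_sum fun p _ => ?_
            exact le_trans (measure_union_le _ _)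
              (add_le_add (toE _ (hA p.1 p.2)) (toE _ (hB p.1 p.2)))
        _ = (Fintype.card S * Fintype.card A : ℕ) •
            (ENNReal.ofReal (Real.exp (-L)) + ENNReal.ofReal (Real.exp (-L))) := by
            rw [Finset.sum_const, Finset.card_univ, Fintype.card_prod]
        _ ≤ ENNReal.ofReal (δ / (4 * Mep)) := by
            rw [← ENNReal.ofReal_add (Real.exp_nonneg _) (Real.exp_nonneg _),
              nsmul_eq_mul, ← ENNReal.ofReal_natCast, ← ENNReal.ofReal_mul (by positivity)]
            refine ENNReal.ofReal_le_ofReal ?_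
            rw [hexpL]
            push_cast
            rw [← add_div]
            refine le_of_eq ?_
            field_simp [hMne, hcSne, hcAne]
            ring
    set E := {ω | supNorm (fun s a =>
        mcBellman M γ N (fun i => Y i ω) θstar s a - bellman M γ θstar s a) ≤ R} with hEdef
    have hδ3Mep : 0 ≤ 1 - δ / (3 * Mep) := by
      have h31 : δ / (3 * Mep) ≤ 1 := by
        rw [div_le_one (by linarith)]
        linarith
      linarith
    have hδ4 : 0 ≤ δ / (4 * Mep) := by positivity
    have key1 : (1 : ENNReal) ≤ μ E + μ Eᶜ := by
      calc (1 : ENNReal) = μ Set.univ := (measure_univ (μ := μ)).symm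
        _ = μ (E ∪ Eᶜ) := by rw [Set.union_compl_self]
        _ ≤ μ E + μ Eᶜ := measure_union_le _ _
    have key2 : ENNReal.ofReal (1 - δ / (3 * Mep)) + ENNReal.ofReal (δ / (4 * Mep))
        ≤ μ E + ENNReal.ofReal (δ / (4 * Mep)) := by
      have h43 : δ / (4 * Mep) ≤ δ / (3 * Mep) := by
        rw [div_le_div_iff₀ (by linarith) (by linarith)]
        nlinarith
      calc ENNReal.ofReal (1 - δ / (3 * Mep)) + ENNReal.ofReal (δ / (4 * Mep))
          = ENNReal.ofReal (1 - δ / (3 * Mep) + δ / (4 * Mep)) :=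
            (ENNReal.ofReal_add hδ3Mep hδ4).symm
        _ ≤ ENNReal.ofReal 1 := ENNReal.ofReal_le_ofReal (by linarith)
        _ = 1 := ENNReal.ofReal_one
        _ ≤ μ E + μ Eᶜ := key1
        _ ≤ μ E + ENNReal.ofReal (δ / (4 * Mep)) := add_le_add le_rfl hcompl
    exact (ENNReal.add_le_add_iff_right ENNReal.ofReal_ne_top).1 key2

end VRQ
end

section
/- Let θ* be the optimal Q-function for the reward r, and let θ̂ be the optimal Q-function for a perturbed reward r̃ : S×A → ℝ (equivalently, the unique fixed point of the Bellman operator with r replaced by r̃). Let π* be a greedy policy for θ*, i.e. π*(s) ∈ argmax_a θ*(s,a), and let π̂ be a greedy policy for θ̂. Then for every state-action pair (s,a): |θ*(s,a) − θ̂(s,a)| ≤ max{ ((I − γP^{π*})^{−1}|r̃ − r|)(s,a), ((I − γP^{π̂})^{−1}|r̃ − r|)(s,a) }, where |r̃ − r| denotes the function (s,a) ↦ |r̃(s,a) − r(s,a)|. -/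
open MeasureTheory ProbabilityTheory Finset

namespace VRQ

variable {S A : Type} [Fintype S] [Fintype A] [Nonempty S] [Nonempty A]

lemma polOp_mono (M : MDP S A) (π : S → A) {u v : S → A → ℝ}
    (h : ∀ s a, u s a ≤ v s a) : ∀ s a, polOp M π u s a ≤ polOp M π v s a := by
  intro s a
  refine Finset.sum_le_sum fun s' _ => ?_
  exact mul_le_mul_of_nonneg_left (h s' (π s')) (M.P_nonneg s a s')

lemma polOp_iter_mono (M : MDP S A) (π : S → A) (n : ℕ) {u v : S → A → ℝ}
    (h : ∀ s a, u s a ≤ v s a) :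
    ∀ s a, (polOp M π)^[n] u s a ≤ (polOp M π)^[n] v s a := by
  induction n generalizing u v with
  | zero => simpa using h
  | succ n ih =>
    intro s a
    rw [Function.iterate_succ_apply, Function.iterate_succ_apply]
    exact ih (polOp_mono M π h) s a

lemma polOp_abs_le (M : MDP S A) (π : S → A) {u : S → A → ℝ} {C : ℝ}
    (h : ∀ s a, |u s a| ≤ C) : ∀ s a, |polOp M π u s a| ≤ C := by
  intro s a
  calc |∑ s', M.P s a s' * u s' (π s')| ≤ ∑ s', |M.P s a s' * u s' (π s')| :=
        Finset.abs_sum_le_sum_abs _ _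
    _ ≤ ∑ s', M.P s a s' * C := by
        refine Finset.sum_le_sum fun s' _ => ?_
        rw [abs_mul, abs_of_nonneg (M.P_nonneg s a s')]
        exact mul_le_mul_of_nonneg_left (h _ _) (M.P_nonneg s a s')
    _ = C := by rw [← Finset.sum_mul, M.P_sum_one, one_mul]

lemma polOp_iter_abs_le (M : MDP S A) (π : S → A) {u : S → A → ℝ} {C : ℝ}
    (h : ∀ s a, |u s a| ≤ C) (n : ℕ) : ∀ s a, |(polOp M π)^[n] u s a| ≤ C := by
  induction n with
  | zero => simpa using h
  | succ n ih =>
    rw [Function.iterate_succ_apply']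
    exact polOp_abs_le M π ih

lemma polOp_add_smul (M : MDP S A) (π : S → A) (u v : S → A → ℝ) (c : ℝ) :
    polOp M π (fun s a => u s a + c * v s a) =
      fun s a => polOp M π u s a + c * polOp M π v s a := by
  funext s a
  simp only [polOp, mul_add, Finset.sum_add_distrib, Finset.mul_sum]
  congr 1
  exact Finset.sum_congr rfl fun _ _ => by ring

lemma polOp_iter_add_smul (M : MDP S A) (π : S → A) (u v : S → A → ℝ) (c : ℝ) (n : ℕ) :
    (polOp M π)^[n] (fun s a => u s a + c * v s a) =
      fun s a => (polOp M π)^[n] u s a + c * (polOp M π)^[n] v s a := by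
  induction n with
  | zero => simp
  | succ n ih =>
    rw [Function.iterate_succ_apply', ih, Function.iterate_succ_apply',
      Function.iterate_succ_apply']
    exact polOp_add_smul M π _ _ c

lemma supNorm_bound (θ : S → A → ℝ) : ∀ s a, |θ s a| ≤ supNorm θ := fun s a =>
  Finset.le_sup' (fun p : S × A => |θ p.1 p.2|) (Finset.mem_univ (s, a))

lemma resolvent_ge (M : MDP S A) {γ : ℝ} (hγ0 : 0 < γ) (hγ1 : γ < 1) (π : S → A)
    {f w : S → A → ℝ} (hf : ∀ s a, f s a ≤ w s a + γ * polOp M π f s a) :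
    ∀ s a, f s a ≤ resolvent M γ π w s a := by
  intro s a
  have hγn : ∀ n : ℕ, (0:ℝ) ≤ γ ^ n := fun n => pow_nonneg hγ0.le n
  -- step bound by induction
  have hb : ∀ n : ℕ, f s a ≤
      (∑ k ∈ Finset.range n, γ ^ k * (polOp M π)^[k] w s a) +
        γ ^ n * (polOp M π)^[n] f s a := by
    intro n
    induction n with
    | zero => simp
    | succ n ih =>
      refine ih.trans ?_
      have hmono := polOp_iter_mono M π n hf s a
      rw [polOp_iter_add_smul M π w (polOp M π f) γ n] at hmono
      rw [← Function.iterate_succ_apply] at hmono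
      have h5 := (mul_le_mul_of_nonneg_left hmono (hγn n)).trans_eq
        (show γ ^ n * ((fun s a => (polOp M π)^[n] w s a +
            γ * (polOp M π)^[n.succ] f s a) s a) =
          γ ^ n * (polOp M π)^[n] w s a + γ ^ (n + 1) * (polOp M π)^[n + 1] f s a by
          simp only [Nat.succ_eq_add_one]; ring)
      rw [Finset.sum_range_succ]
      linarith
  -- summability
  have hsumabs : Summable fun k : ℕ => |γ ^ k * (polOp M π)^[k] w s a| := by
    refine Summable.of_nonneg_of_le (fun k => abs_nonneg _) (fun k => ?_)
      ((summable_geometric_of_lt_one hγ0.le hγ1).mul_right (supNorm w))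
    rw [abs_mul, abs_pow, abs_of_pos hγ0]
    exact mul_le_mul_of_nonneg_left (polOp_iter_abs_le M π (supNorm_bound w) k s a) (hγn k)
  have hsum : Summable fun k : ℕ => γ ^ k * (polOp M π)^[k] w s a := hsumabs.of_abs
  -- limits
  have h1 : Filter.Tendsto (fun n => ∑ k ∈ Finset.range n, γ ^ k * (polOp M π)^[k] w s a)
      Filter.atTop (nhds (resolvent M γ π w s a)) := hsum.hasSum.tendsto_sum_nat
  have h2 : Filter.Tendsto (fun n => γ ^ n * (polOp M π)^[n] f s a)
      Filter.atTop (nhds 0) := by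
    have hbd : ∀ n : ℕ, ‖γ ^ n * (polOp M π)^[n] f s a‖ ≤ γ ^ n * supNorm f := by
      intro n
      show |γ ^ n * (polOp M π)^[n] f s a| ≤ γ ^ n * supNorm f
      rw [abs_mul, abs_pow, abs_of_pos hγ0]
      exact mul_le_mul_of_nonneg_left (polOp_iter_abs_le M π (supNorm_bound f) n s a) (hγn n)
    have hlim : Filter.Tendsto (fun n : ℕ => γ ^ n * supNorm f) Filter.atTop (nhds 0) := by
      have := (tendsto_pow_atTop_nhds_zero_of_lt_one hγ0.le hγ1).mul_const (supNorm f)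
      simpa using this
    exact squeeze_zero_norm hbd hlim
  have h3 : Filter.Tendsto (fun n => (∑ k ∈ Finset.range n, γ ^ k * (polOp M π)^[k] w s a)
      + γ ^ n * (polOp M π)^[n] f s a) Filter.atTop (nhds (resolvent M γ π w s a)) := by
    simpa using h1.add h2
  exact ge_of_tendsto' h3 hb

/-- Elementwise bound on `|θ* - θ̂|` under a reward perturbation (Lemma 6). -/
theorem stmt17 :
    ∀ (S A : Type) [Fintype S] [Fintype A] [Nonempty S] [Nonempty A]
      (M : MDP S A) (γ : ℝ), 0 < γ → γ < 1 →
      ∀ θstar : S → A → ℝ, bellman M γ θstar = θstar →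
      ∀ (rt : S → A → ℝ) (θhat : S → A → ℝ),
        bellman { M with r := rt } γ θhat = θhat →
      ∀ πstar : S → A, (∀ s, θstar s (πstar s) = vmax θstar s) →
      ∀ πhat : S → A, (∀ s, θhat s (πhat s) = vmax θhat s) →
      ∀ s a, |θstar s a - θhat s a| ≤
        max (resolvent M γ πstar (fun s' a' => |rt s' a' - M.r s' a'|) s a)
          (resolvent M γ πhat (fun s' a' => |rt s' a' - M.r s' a'|) s a) := by
  intro S A _ _ _ _ M γ hγ0 hγ1 θstar hθstar rt θhat hθhat πstar hπstar πhat hπhat s a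
  set w : S → A → ℝ := fun s' a' => |rt s' a' - M.r s' a'| with hw
  have h1 : ∀ s a, θstar s a = M.r s a + γ * ∑ s', M.P s a s' * vmax θstar s' := by
    intro s a
    conv_lhs => rw [← hθstar]
    rfl
  have h2 : ∀ s a, θhat s a = rt s a + γ * ∑ s', M.P s a s' * vmax θhat s' := by
    intro s a
    conv_lhs => rw [← hθhat]
    rfl
  have key : ∀ (θ1 θ2 : S → A → ℝ) (r1 r2 : S → A → ℝ) (π : S → A),
      (∀ s a, θ1 s a = r1 s a + γ * ∑ s', M.P s a s' * vmax θ1 s') →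
      (∀ s a, θ2 s a = r2 s a + γ * ∑ s', M.P s a s' * vmax θ2 s') →
      (∀ s, θ1 s (π s) = vmax θ1 s) →
      (∀ s a, r1 s a - r2 s a ≤ w s a) →
      ∀ s a, θ1 s a - θ2 s a ≤ resolvent M γ π w s a := by
    intro θ1 θ2 r1 r2 π e1 e2 hπ hr
    refine resolvent_ge M hγ0 hγ1 π (f := fun s a => θ1 s a - θ2 s a) ?_
    intro s a
    have hvs : ∀ s', vmax θ1 s' - vmax θ2 s' ≤ θ1 s' (π s') - θ2 s' (π s') := by
      intro s'
      have hle : θ2 s' (π s') ≤ vmax θ2 s' :=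
        Finset.le_sup' (θ2 s') (Finset.mem_univ (π s'))
      have := hπ s'
      linarith
    have hsum : ∑ s', M.P s a s' * vmax θ1 s' - ∑ s', M.P s a s' * vmax θ2 s'
        ≤ polOp M π (fun s a => θ1 s a - θ2 s a) s a := by
      rw [← Finset.sum_sub_distrib]
      refine Finset.sum_le_sum fun s' _ => ?_
      rw [← mul_sub]
      exact mul_le_mul_of_nonneg_left (hvs s') (M.P_nonneg s a s')
    have hmul := mul_le_mul_of_nonneg_left hsum hγ0.le
    rw [mul_sub] at hmul
    have hr' := hr s a
    show θ1 s a - θ2 s a ≤ _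
    rw [e1 s a, e2 s a]
    linarith
  have hA : θstar s a - θhat s a ≤ resolvent M γ πstar w s a := by
    refine key θstar θhat M.r rt πstar h1 h2 hπstar (fun s a => ?_) s a
    rw [hw]
    calc M.r s a - rt s a ≤ |M.r s a - rt s a| := le_abs_self _
      _ = |rt s a - M.r s a| := abs_sub_comm _ _
  have hB : θhat s a - θstar s a ≤ resolvent M γ πhat w s a := by
    refine key θhat θstar rt M.r πhat h2 h1 hπhat (fun s a => ?_) s a
    exact le_abs_self _
  exact abs_sub_le_iff.mpr
    ⟨hA.trans (le_max_left _ _), hB.trans (le_max_right _ _)⟩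

end VRQ
end
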